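/- arXiv:1311.0377 — 15 statements merged into one kernel-verified Lean document; each statement's English description precedes it below -/
import Mathlib

section
/- Let λ be a nonzero complex number and let x ∈ ℂ^m, y ∈ ℂ^k. Then C·(x,y) = λ·(x,y) if and only if ((λ+1)/(2λ))·x = −D·y and ((λ+1)/2)·y = −F·x. -/
open Matrix

/-- For a nonzero complex number `lam` and vectors `x ∈ ℂ^m`, `y ∈ ℂ^k`,
`C·(x,y) = lam·(x,y)` iff `((lam+1)/(2lam))·x = −D·y` and `((lam+1)/2)·y = −F·x`,
where `C = w₁·w₂` is the Coxeter transformation. -/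
theorem stmt_0 (m k : ℕ) (hm : 0 < m) (hk : 0 < k)
    (D : Matrix (Fin m) (Fin k) ℂ) (F : Matrix (Fin k) (Fin m) ℂ)
    (C : Matrix (Fin m ⊕ Fin k) (Fin m ⊕ Fin k) ℂ)
    (hC : C = fromBlocks (-1) ((-2 : ℂ) • D) 0 1 * fromBlocks 1 0 ((-2 : ℂ) • F) (-1))
    (lam : ℂ) (hlam : lam ≠ 0) (x : Fin m → ℂ) (y : Fin k → ℂ) :
    C *ᵥ Sum.elim x y = lam • Sum.elim x y ↔
      ((lam + 1) / (2 * lam)) • x = -(D *ᵥ y) ∧ ((lam + 1) / 2) • y = -(F *ᵥ x) := by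
  subst hC
  rw [← mulVec_mulVec]
  simp only [fromBlocks_mulVec, neg_mulVec, one_mulVec, zero_mulVec, smul_mulVec,
    mulVec_add, mulVec_neg, mulVec_smul, zero_add, add_zero, neg_neg, smul_neg, neg_smul,
    Sum.elim_comp_inl, Sum.elim_comp_inr]
  rw [funext_iff, Sum.forall]
  simp only [Sum.elim_inl, Sum.elim_inr, Pi.add_apply, Pi.neg_apply, Pi.smul_apply, smul_eq_mul]
  constructor
  · rintro ⟨h1, h2⟩
    have c2 : ((lam + 1) / 2) • y = -(F *ᵥ x) := by
      funext j
      have := h2 j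
      simp only [Pi.neg_apply, Pi.smul_apply, smul_eq_mul]
      linear_combination (-1/2 : ℂ) * this
    have hb : F *ᵥ x = -(((lam + 1) / 2) • y) := neg_eq_iff_eq_neg.mp c2.symm
    refine ⟨funext fun i => ?_, c2⟩
    have h := h1 i
    rw [hb] at h
    simp only [mulVec_neg, mulVec_smul, Pi.add_apply, Pi.neg_apply, Pi.smul_apply, smul_eq_mul] at h ⊢
    field_simp at h ⊢
    linear_combination (-1 : ℂ) * h
  · rintro ⟨c1, c2⟩
    have hb : F *ᵥ x = -(((lam + 1) / 2) • y) := neg_eq_iff_eq_neg.mp c2.symm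
    have ha : D *ᵥ y = -(((lam + 1) / (2 * lam)) • x) := neg_eq_iff_eq_neg.mp c1.symm
    constructor <;> intro i
    · rw [hb]
      simp only [mulVec_neg, mulVec_smul, ha, Pi.add_apply, Pi.neg_apply, Pi.smul_apply, smul_eq_mul]
      field_simp
      ring
    · rw [hb]
      simp only [Pi.add_apply, Pi.neg_apply, Pi.smul_apply, smul_eq_mul]
      field_simp
      ring
end

section
/- Let λ be a nonzero complex number and suppose C·(x,y) = λ·(x,y) for some x ∈ ℂ^m, y ∈ ℂ^k. Then (D·F)·x = ((λ+1)²/(4λ))·x and (F·D)·y = ((λ+1)²/(4λ))·y. -/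
open Matrix

/-- If `C·(x,y) = lam·(x,y)` with `lam ≠ 0`, then
`(DF)·x = ((lam+1)²/(4lam))·x` and `(FD)·y = ((lam+1)²/(4lam))·y`. -/
theorem stmt_1 (m k : ℕ) (hm : 0 < m) (hk : 0 < k)
    (D : Matrix (Fin m) (Fin k) ℂ) (F : Matrix (Fin k) (Fin m) ℂ)
    (C : Matrix (Fin m ⊕ Fin k) (Fin m ⊕ Fin k) ℂ)
    (hC : C = fromBlocks (-1) ((-2 : ℂ) • D) 0 1 * fromBlocks 1 0 ((-2 : ℂ) • F) (-1))
    (lam : ℂ) (hlam : lam ≠ 0) (x : Fin m → ℂ) (y : Fin k → ℂ)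
    (heig : C *ᵥ Sum.elim x y = lam • Sum.elim x y) :
    (D * F) *ᵥ x = ((lam + 1) ^ 2 / (4 * lam)) • x ∧
    (F * D) *ᵥ y = ((lam + 1) ^ 2 / (4 * lam)) • y := by
  subst hC
  have hA : (-1 : Matrix (Fin m) (Fin m) ℂ) * (1 : Matrix (Fin m) (Fin m) ℂ)
      + ((-2 : ℂ) • D) * ((-2 : ℂ) • F)
      = (4 : ℂ) • (D * F) - 1 := by
    rw [Matrix.mul_one, Matrix.smul_mul, Matrix.mul_smul, smul_smul]
    norm_num
    abel
  have hB : (-1 : Matrix (Fin m) (Fin m) ℂ) * (0 : Matrix (Fin m) (Fin k) ℂ)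
      + ((-2 : ℂ) • D) * (-1 : Matrix (Fin k) (Fin k) ℂ) = (2 : ℂ) • D := by
    rw [Matrix.mul_zero, zero_add, Matrix.mul_neg, Matrix.mul_one, ← neg_smul]
    norm_num
  have hCb : (0 : Matrix (Fin k) (Fin m) ℂ) * (1 : Matrix (Fin m) (Fin m) ℂ)
      + (1 : Matrix (Fin k) (Fin k) ℂ) * ((-2 : ℂ) • F) = (-2 : ℂ) • F := by
    rw [Matrix.zero_mul, zero_add, Matrix.one_mul]
  have hDb : (0 : Matrix (Fin k) (Fin m) ℂ) * (0 : Matrix (Fin m) (Fin k) ℂ)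
      + (1 : Matrix (Fin k) (Fin k) ℂ) * (-1 : Matrix (Fin k) (Fin k) ℂ)
      = (-1 : Matrix (Fin k) (Fin k) ℂ) := by
    rw [Matrix.mul_zero, zero_add, Matrix.mul_neg, Matrix.mul_one]
  rw [fromBlocks_multiply, hA, hB, hCb, hDb, fromBlocks_mulVec] at heig
  have e1 : ((4 : ℂ) • (D * F) - 1) *ᵥ x + ((2 : ℂ) • D) *ᵥ y = lam • x :=
    funext fun i => congrFun heig (Sum.inl i)
  have e2 : ((-2 : ℂ) • F) *ᵥ x + (-1 : Matrix (Fin k) (Fin k) ℂ) *ᵥ y = lam • y :=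
    funext fun i => congrFun heig (Sum.inr i)
  have E1 : (4 : ℂ) • ((D * F) *ᵥ x) - x + (2 : ℂ) • (D *ᵥ y) = lam • x := by
    rw [sub_mulVec, smul_mulVec, smul_mulVec, one_mulVec] at e1
    linear_combination (norm := module) e1
  have E2 : (-2 : ℂ) • (F *ᵥ x) - y = lam • y := by
    rw [smul_mulVec, neg_mulVec, one_mulVec] at e2
    linear_combination (norm := module) e2
  by_cases hl1 : lam = -1
  · subst hl1
    have hFx : F *ᵥ x = 0 := by
      have h0 : (-2 : ℂ) • (F *ᵥ x) = (-2 : ℂ) • (0 : Fin k → ℂ) := by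
        rw [smul_zero]; linear_combination (norm := module) E2
      exact smul_right_injective (Fin k → ℂ) (by norm_num : (-2:ℂ) ≠ 0) h0
    have hDFx : (D * F) *ᵥ x = 0 := by rw [← mulVec_mulVec, hFx, mulVec_zero]
    have hDy : D *ᵥ y = 0 := by
      have h2 : (2 : ℂ) • (D *ᵥ y) = (2 : ℂ) • (0 : Fin m → ℂ) := by
        rw [hDFx] at E1; rw [smul_zero]; linear_combination (norm := module) E1
      exact smul_right_injective (Fin m → ℂ) (by norm_num : (2:ℂ) ≠ 0) h2
    have hscal : ((-1 : ℂ) + 1) ^ 2 / (4 * (-1)) = 0 := by norm_num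
    refine ⟨?_, ?_⟩
    · rw [hDFx, hscal, zero_smul]
    · rw [← mulVec_mulVec, hDy, mulVec_zero, hscal, zero_smul]
  · have hl1' : lam + 1 ≠ 0 := fun h => hl1 (by linear_combination h)
    have hy : y = (-2 / (lam + 1)) • (F *ᵥ x) := by
      have h1 : (lam + 1) • y = (-2 : ℂ) • (F *ᵥ x) := by
        linear_combination (norm := module) (-1 : ℂ) • E2
      have h2 := congrArg (fun v => ((lam+1)⁻¹ : ℂ) • v) h1
      simp only [smul_smul, inv_mul_cancel₀ hl1', one_smul] at h2
      rw [h2]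
      congr 1
      rw [div_eq_mul_inv, mul_comm]
    have hDFx : (D * F) *ᵥ x = ((lam + 1) ^ 2 / (4 * lam)) • x := by
      have hE : (4 * lam / (lam + 1)) • ((D * F) *ᵥ x) = (lam + 1) • x := by
        rw [hy, mulVec_smul, mulVec_mulVec] at E1
        have hc : (4 * lam / (lam + 1) : ℂ)
            = (4 : ℂ) + 2 * (-2 / (lam + 1)) := by
          field_simp
          ring
        rw [hc, add_smul, mul_smul]
        linear_combination (norm := module) E1
      have h4 : (4 * lam / (lam + 1) : ℂ) ≠ 0 :=
        div_ne_zero (by simpa using hlam) hl1'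
      have h5 := congrArg (fun v => ((4 * lam / (lam + 1))⁻¹ : ℂ) • v) hE
      simp only [smul_smul, inv_mul_cancel₀ h4, one_smul] at h5
      rw [h5]
      congr 1
      field_simp
    refine ⟨hDFx, ?_⟩
    have hkey : (F * D) *ᵥ (F *ᵥ x) = F *ᵥ ((D * F) *ᵥ x) := by
      rw [mulVec_mulVec, mulVec_mulVec, Matrix.mul_assoc]
    rw [hy, mulVec_smul, hkey, hDFx, mulVec_smul, smul_comm]
end

section
/- Let K be the (m+k)×(m+k) block matrix [[2I, 2D],[2F, 2I]]. For every vector z ∈ ℝ^(m+k), one has K·z = 0 if and only if C·z = z; that is, the kernel of the Cartan matrix K coincides with the space of fixed points of the Coxeter transformation C. -/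
open Matrix

lemma elim_eq_iff' {α β γ : Type*} (a c : α → γ) (b d : β → γ) :
    Sum.elim a b = Sum.elim c d ↔ a = c ∧ b = d := by
  constructor
  · intro h
    exact ⟨funext fun i => congrFun h (Sum.inl i), funext fun j => congrFun h (Sum.inr j)⟩
  · rintro ⟨rfl, rfl⟩; rfl

/-- The kernel of the Cartan matrix `K = [[2I,2D],[2F,2I]]` coincides with
the space of fixed points of the Coxeter transformation `C = w₁·w₂`:
for every `z`, `K·z = 0 ↔ C·z = z`. -/
theorem stmt_2 (m k : ℕ) (hm : 0 < m) (hk : 0 < k)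
    (D : Matrix (Fin m) (Fin k) ℝ) (F : Matrix (Fin k) (Fin m) ℝ)
    (C : Matrix (Fin m ⊕ Fin k) (Fin m ⊕ Fin k) ℝ)
    (hC : C = fromBlocks (-1) ((-2 : ℝ) • D) 0 1 * fromBlocks 1 0 ((-2 : ℝ) • F) (-1))
    (K : Matrix (Fin m ⊕ Fin k) (Fin m ⊕ Fin k) ℝ)
    (hK : K = fromBlocks ((2 : ℝ) • 1) ((2 : ℝ) • D) ((2 : ℝ) • F) ((2 : ℝ) • 1)) :
    ∀ z : Fin m ⊕ Fin k → ℝ, K *ᵥ z = 0 ↔ C *ᵥ z = z := by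
  subst hC hK
  intro z
  obtain ⟨x, y, rfl⟩ : ∃ x y, z = Sum.elim x y :=
    ⟨z ∘ Sum.inl, z ∘ Sum.inr, (Sum.elim_comp_inl_inr z).symm⟩
  rw [fromBlocks_multiply, fromBlocks_mulVec, fromBlocks_mulVec]
  rw [show (0 : Fin m ⊕ Fin k → ℝ) = Sum.elim (0 : Fin m → ℝ) (0 : Fin k → ℝ) by
    funext s; cases s <;> rfl, elim_eq_iff', elim_eq_iff']
  simp only [smul_mulVec, one_mulVec, neg_mulVec, mulVec_mulVec,
    Matrix.neg_mul, Matrix.one_mul, Matrix.mul_one, Matrix.mul_neg, neg_neg, zero_mulVec,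
    Matrix.zero_mul, add_zero, zero_add, neg_zero, Matrix.mul_smul, Matrix.smul_mul, smul_smul,
    add_mulVec, Sum.elim_comp_inl, Sum.elim_comp_inr]
  norm_num
  constructor
  · rintro ⟨h1, h2⟩
    have h3 := congrArg (fun v => D *ᵥ v) h2
    simp only [mulVec_add, mulVec_smul, mulVec_zero, mulVec_mulVec] at h3
    constructor
    · linear_combination (norm := module) (2:ℝ) • h3 - h1
    · linear_combination (norm := module) -h2
  · rintro ⟨h1, h2⟩
    have h3 := congrArg (fun v => D *ᵥ v) h2
    simp only [mulVec_add, mulVec_smul, mulVec_neg, mulVec_mulVec] at h3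
    constructor
    · linear_combination (norm := module) -h1 - (2:ℝ) • h3
    · linear_combination (norm := module) -h2
end

section
/- Let B be the (m+k)×(m+k) symmetric block matrix [[I, D],[Dᵀ, I]]. For every vector z ∈ ℝ^(m+k), one has B·z = z if and only if C·z = −z; that is, the space of fixed points of B coincides with the space of anti-fixed points of the Coxeter transformation C. -/
open Matrix

/-- With `F = Dᵀ` and `B = [[I,D],[Dᵀ,I]]`, the space of fixed points of `B`
coincides with the space of anti-fixed points of the Coxeter transformation `C = w₁·w₂`:
for every `z`, `B·z = z ↔ C·z = −z`. -/
theorem stmt_3 (m k : ℕ) (hm : 0 < m) (hk : 0 < k)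
    (D : Matrix (Fin m) (Fin k) ℝ)
    (C : Matrix (Fin m ⊕ Fin k) (Fin m ⊕ Fin k) ℝ)
    (hC : C = fromBlocks (-1) ((-2 : ℝ) • D) 0 1 * fromBlocks 1 0 ((-2 : ℝ) • Dᵀ) (-1))
    (B : Matrix (Fin m ⊕ Fin k) (Fin m ⊕ Fin k) ℝ)
    (hB : B = fromBlocks 1 D Dᵀ 1) :
    ∀ z : Fin m ⊕ Fin k → ℝ, B *ᵥ z = z ↔ C *ᵥ z = -z := by
  set w₁ : Matrix (Fin m ⊕ Fin k) (Fin m ⊕ Fin k) ℝ :=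
    fromBlocks (-1) ((-2 : ℝ) • D) 0 1 with hw₁
  have hww : w₁ * w₁ = 1 := by
    rw [hw₁, Matrix.fromBlocks_multiply]
    simp [Matrix.fromBlocks_one]
  have key : C + 1 = w₁ * ((-2 : ℝ) • (B - 1)) := by
    rw [hC, hB, hw₁]
    rw [← Matrix.fromBlocks_one]
    ext i j
    cases i <;> cases j <;>
      simp [Matrix.fromBlocks_multiply, Matrix.add_apply, Matrix.mul_apply,
        Matrix.sub_apply, Matrix.smul_apply, Matrix.one_apply, Finset.mul_sum,
        mul_comm, mul_assoc, mul_left_comm] <;> ring_nf <;>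
      simp [Finset.sum_ite_eq, Finset.sum_add_distrib, mul_comm] <;> ring
  intro z
  have h1 : (B *ᵥ z = z) ↔ (B - 1) *ᵥ z = 0 := by
    rw [Matrix.sub_mulVec, Matrix.one_mulVec, sub_eq_zero]
  have h2 : (C *ᵥ z = -z) ↔ (C + 1) *ᵥ z = 0 := by
    rw [Matrix.add_mulVec, Matrix.one_mulVec]
    constructor
    · intro h; rw [h]; simp
    · intro h; exact eq_neg_of_add_eq_zero_left h
  rw [h1, h2, key, ← Matrix.mulVec_mulVec]
  constructor
  · intro h
    rw [Matrix.smul_mulVec, h]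
    simp
  · intro h
    have h' : w₁ *ᵥ (w₁ *ᵥ (((-2 : ℝ) • (B - 1)) *ᵥ z)) = 0 := by rw [h]; simp
    rw [Matrix.mulVec_mulVec, hww, Matrix.one_mulVec, Matrix.smul_mulVec] at h'
    have := smul_eq_zero.mp h'
    rcases this with h0 | h0
    · norm_num at h0
    · exact h0
end

section
/- Let U₁ be an m×m real diagonal matrix and U₂ a k×k real diagonal matrix, both with strictly positive diagonal entries, let A be an m×k real matrix, and set D := U₁·A and F := U₂·Aᵀ. Then every complex eigenvalue of the m×m matrix D·F (every complex root of its characteristic polynomial) is a nonnegative real number. -/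
open Matrix

/-- If `U₁`, `U₂` are real diagonal matrices with strictly positive diagonal
entries, `A` is an m×k real matrix, `D = U₁·A` and `F = U₂·Aᵀ`, then every complex root of
the characteristic polynomial of `D·F` is a nonnegative real number. -/
theorem stmt_4 (m k : ℕ) (hm : 0 < m) (hk : 0 < k)
    (U₁ : Matrix (Fin m) (Fin m) ℝ) (U₂ : Matrix (Fin k) (Fin k) ℝ)
    (hU₁ : U₁.IsDiag) (hU₂ : U₂.IsDiag)
    (hU₁pos : ∀ i, 0 < U₁ i i) (hU₂pos : ∀ i, 0 < U₂ i i)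
    (A : Matrix (Fin m) (Fin k) ℝ)
    (D : Matrix (Fin m) (Fin k) ℝ) (hD : D = U₁ * A)
    (F : Matrix (Fin k) (Fin m) ℝ) (hF : F = U₂ * Aᵀ)
    (z : ℂ) (hz : (((D * F)).map Complex.ofReal).charpoly.IsRoot z) :
    ∃ r : ℝ, 0 ≤ r ∧ z = (r : ℂ) := by
  classical
  set N : Matrix (Fin m) (Fin m) ℂ := (D * F).map Complex.ofReal with hN
  have hmap : (charmatrix N).map (Polynomial.evalRingHom z) = diagonal (fun _ => z) - N := by
    ext i j
    by_cases h : i = j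
    · subst h
      simp [charmatrix_apply_eq]
    · simp [charmatrix_apply_ne _ _ _ h, diagonal_apply_ne _ h]
  have hdet : (diagonal (fun _ : Fin m => z) - N).det = 0 := by
    rw [← hmap, ← RingHom.mapMatrix_apply, ← RingHom.map_det]
    exact hz
  obtain ⟨v, hv0, hveq⟩ := (Matrix.exists_mulVec_eq_zero_iff).mpr hdet
  have heig : ∀ i, (N *ᵥ v) i = z * v i := by
    intro i
    have := congrFun hveq i
    simp [sub_mulVec, mulVec_diagonal, sub_eq_zero] at this
    simpa using this.symm
  have hDentry : ∀ i l, D i l = U₁ i i * A i l := by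
    intro i l
    rw [hD, mul_apply]
    refine Finset.sum_eq_single_of_mem i (Finset.mem_univ i) (fun p _ hp => ?_)
    rw [hU₁ (Ne.symm hp), zero_mul]
  have hFentry : ∀ l j, F l j = U₂ l l * A j l := by
    intro l j
    rw [hF, mul_apply]
    refine Finset.sum_eq_single_of_mem l (Finset.mem_univ l) (fun p _ hp => ?_)
    rw [hU₂ (Ne.symm hp), zero_mul]
  set w : Fin k → ℂ := fun l => ∑ j, (A j l : ℂ) * v j with hw
  have hd0 : ∀ i, (U₁ i i : ℂ) ≠ 0 := fun i => by
    exact_mod_cast (hU₁pos i).ne'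
  -- key eigen equation in terms of w
  have key : ∀ i, (U₁ i i : ℂ) * (∑ l, ((U₂ l l : ℂ) * (A i l : ℂ)) * w l) = z * v i := by
    intro i
    have hterm : ∀ j, N i j * v j
        = ∑ l, (U₁ i i : ℂ) * ((U₂ l l : ℂ) * (A i l : ℂ) * ((A j l : ℂ) * v j)) := by
      intro j
      rw [hN, map_apply, mul_apply]
      simp only [hDentry, hFentry]
      push_cast
      rw [Finset.sum_mul]
      exact Finset.sum_congr rfl fun l _ => by ring
    calc (U₁ i i : ℂ) * (∑ l, ((U₂ l l : ℂ) * (A i l : ℂ)) * w l)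
        = ∑ l, ∑ j, (U₁ i i : ℂ) * ((U₂ l l : ℂ) * (A i l : ℂ) * ((A j l : ℂ) * v j)) := by
          simp only [hw, Finset.mul_sum]
      _ = ∑ j, ∑ l, (U₁ i i : ℂ) * ((U₂ l l : ℂ) * (A i l : ℂ) * ((A j l : ℂ) * v j)) :=
          Finset.sum_comm
      _ = ∑ j, N i j * v j := by
          exact Finset.sum_congr rfl fun j _ => (hterm j).symm
      _ = (N *ᵥ v) i := rfl
      _ = z * v i := heig i
  have key' : ∀ i, (∑ l, ((U₂ l l : ℂ) * (A i l : ℂ)) * w l) = (z / (U₁ i i : ℂ)) * v i := by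
    intro i
    rw [eq_comm, div_mul_eq_mul_div, div_eq_iff (hd0 i), mul_comm _ ((U₁ i i : ℂ))]
    exact (key i).symm
  have hconj : ∀ (x : ℂ), (starRingEnd ℂ) x * x = (Complex.normSq x : ℂ) := fun x => by
    rw [mul_comm, Complex.mul_conj]
  have h2 : ∑ i, (starRingEnd ℂ) (v i) * ((z / (U₁ i i : ℂ)) * v i)
      = ∑ l, (U₂ l l : ℂ) * ((starRingEnd ℂ) (w l) * w l) := by
    calc ∑ i, (starRingEnd ℂ) (v i) * ((z / (U₁ i i : ℂ)) * v i)
        = ∑ i, (starRingEnd ℂ) (v i) * (∑ l, ((U₂ l l : ℂ) * (A i l : ℂ)) * w l) := by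
          simp_rw [key']
      _ = ∑ l, (U₂ l l : ℂ) * ((∑ i, (A i l : ℂ) * (starRingEnd ℂ) (v i)) * w l) := by
          simp_rw [Finset.mul_sum]
          rw [Finset.sum_comm]
          refine Finset.sum_congr rfl fun l _ => ?_
          rw [Finset.sum_mul, Finset.mul_sum]
          exact Finset.sum_congr rfl fun i _ => by ring
      _ = ∑ l, (U₂ l l : ℂ) * ((starRingEnd ℂ) (w l) * w l) := by
          refine Finset.sum_congr rfl fun l _ => ?_
          congr 2
          rw [hw, map_sum]
          refine Finset.sum_congr rfl fun j _ => ?_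
          rw [RingHom.map_mul, Complex.conj_ofReal]
  set r : ℝ := ∑ i, Complex.normSq (v i) / U₁ i i with hr
  set s : ℝ := ∑ l, U₂ l l * Complex.normSq (w l) with hs
  have hzr : z * (r : ℂ) = (s : ℂ) := by
    rw [hr, hs]
    push_cast
    rw [Finset.mul_sum]
    calc ∑ i, z * ((Complex.normSq (v i) : ℂ) / (U₁ i i : ℂ))
        = ∑ i, (starRingEnd ℂ) (v i) * ((z / (U₁ i i : ℂ)) * v i) := by
          refine Finset.sum_congr rfl fun i _ => ?_
          rw [← hconj (v i)]
          ring
      _ = ∑ l, (U₂ l l : ℂ) * ((starRingEnd ℂ) (w l) * w l) := h2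
      _ = ∑ l, (U₂ l l : ℂ) * (Complex.normSq (w l) : ℂ) := by
          exact Finset.sum_congr rfl fun l _ => by rw [hconj]
  have hrpos : 0 < r := by
    obtain ⟨i, hi⟩ := Function.ne_iff.mp hv0
    refine Finset.sum_pos' (fun i _ => div_nonneg (Complex.normSq_nonneg _) (hU₁pos i).le)
      ⟨i, Finset.mem_univ i, div_pos ?_ (hU₁pos i)⟩
    exact Complex.normSq_pos.mpr hi
  have hsnn : 0 ≤ s :=
    Finset.sum_nonneg fun l _ => mul_nonneg (hU₂pos l).le (Complex.normSq_nonneg _)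
  refine ⟨s / r, div_nonneg hsnn hrpos.le, ?_⟩
  have hr0 : (r : ℂ) ≠ 0 := by exact_mod_cast hrpos.ne'
  rw [Complex.ofReal_div, eq_div_iff hr0]
  exact hzr
end

section
/- Let φ, λ ∈ ℂ with λ ≠ 0, λ ≠ −1 and (λ+1)² = 4λφ, and let x ∈ ℂ^m satisfy (D·F)·x = φ·x. Then the vector z := (x, −(2/(λ+1))·F·x) satisfies C·z = λ·z. In particular, every eigenvalue φ of DF gives rise to the eigenvalues λ = 2φ − 1 ± 2√(φ(φ−1)) of the Coxeter transformation C. -/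
open Matrix

/-- If `lam ≠ 0`, `lam ≠ −1`, `(lam+1)² = 4·lam·φ` and `(DF)·x = φ·x`, then
`z = (x, −(2/(lam+1))·F·x)` satisfies `C·z = lam·z`; thus every eigenvalue `φ` of `DF`
gives rise to the eigenvalues `lam = 2φ − 1 ± 2√(φ(φ−1))` of the Coxeter transformation. -/
theorem stmt_5 (m k : ℕ) (hm : 0 < m) (hk : 0 < k)
    (D : Matrix (Fin m) (Fin k) ℂ) (F : Matrix (Fin k) (Fin m) ℂ)
    (C : Matrix (Fin m ⊕ Fin k) (Fin m ⊕ Fin k) ℂ)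
    (hC : C = fromBlocks (-1) ((-2 : ℂ) • D) 0 1 * fromBlocks 1 0 ((-2 : ℂ) • F) (-1))
    (phi lam : ℂ) (hlam0 : lam ≠ 0) (hlam1 : lam ≠ -1)
    (hquad : (lam + 1) ^ 2 = 4 * lam * phi)
    (x : Fin m → ℂ) (hx : (D * F) *ᵥ x = phi • x) :
    C *ᵥ Sum.elim x (-(2 / (lam + 1)) • (F *ᵥ x))
      = lam • Sum.elim x (-(2 / (lam + 1)) • (F *ᵥ x)) := by

  have hy : lam + 1 ≠ 0 := fun h => hlam1 (by linear_combination h)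
  have hDFx : D *ᵥ (F *ᵥ x) = phi • x := by rw [mulVec_mulVec, hx]
  subst hC
  rw [fromBlocks_multiply, fromBlocks_mulVec]
  funext i
  cases i with
  | inl i =>
    simp only [Sum.elim_comp_inl, Sum.elim_comp_inr, mulVec_add, mulVec_smul,
      smul_mulVec, Matrix.mul_smul, Matrix.smul_mul, mulVec_mulVec, hx, hDFx,
      Matrix.neg_mul, Matrix.one_mul, Matrix.mul_one, Matrix.mul_neg, neg_neg,
      Matrix.zero_mul, add_zero, zero_add, Matrix.mul_zero, neg_mulVec, one_mulVec,
      zero_mulVec, Matrix.add_mul, add_mulVec, smul_smul, Pi.smul_apply, Pi.add_apply,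
      Pi.neg_apply, Sum.elim_inl, smul_eq_mul]
    field_simp
    linear_combination (-(x i)) * hquad
  | inr i =>
    simp only [Sum.elim_comp_inl, Sum.elim_comp_inr, mulVec_add, mulVec_smul,
      smul_mulVec, Matrix.mul_smul, Matrix.smul_mul, mulVec_mulVec, hx, hDFx,
      Matrix.neg_mul, Matrix.one_mul, Matrix.mul_one, Matrix.mul_neg, neg_neg,
      Matrix.zero_mul, add_zero, zero_add, Matrix.mul_zero, neg_mulVec, one_mulVec,
      zero_mulVec, Matrix.add_mul, add_mulVec, smul_smul, Pi.smul_apply, Pi.add_apply,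
      Pi.neg_apply, Sum.elim_inr, smul_eq_mul]
    field_simp
    ring
end

section
/- Let x ∈ ℂ^m satisfy (D·F)·x = x. Then the vectors z := (x, −F·x) and z̃ := (1/4)·(x, F·x) satisfy C·z = z and C·z̃ = z + z̃. In particular, if x ≠ 0 then C has a Jordan block of size at least 2 at the eigenvalue 1. -/
open Matrix

/-- If `(DF)·x = x`, then `z = (x, −F·x)` and `z̃ = (1/4)·(x, F·x)` satisfy
`C·z = z` and `C·z̃ = z + z̃`; in particular, if `x ≠ 0` then `C` has a Jordan block of
size at least 2 at the eigenvalue 1 (there is a vector killed by `(C−I)²` but not by `C−I`). -/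
theorem stmt_6 (m k : ℕ) (hm : 0 < m) (hk : 0 < k)
    (D : Matrix (Fin m) (Fin k) ℂ) (F : Matrix (Fin k) (Fin m) ℂ)
    (C : Matrix (Fin m ⊕ Fin k) (Fin m ⊕ Fin k) ℂ)
    (hC : C = fromBlocks (-1) ((-2 : ℂ) • D) 0 1 * fromBlocks 1 0 ((-2 : ℂ) • F) (-1))
    (x : Fin m → ℂ) (hx : (D * F) *ᵥ x = x)
    (z ztil : Fin m ⊕ Fin k → ℂ)
    (hz : z = Sum.elim x (-(F *ᵥ x)))
    (hztil : ztil = (1 / 4 : ℂ) • Sum.elim x (F *ᵥ x)) :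
    C *ᵥ z = z ∧ C *ᵥ ztil = z + ztil ∧
    (x ≠ 0 → ∃ v : Fin m ⊕ Fin k → ℂ,
      ((C - 1) * (C - 1)) *ᵥ v = 0 ∧ (C - 1) *ᵥ v ≠ 0) := by
  have hDFx : D *ᵥ (F *ᵥ x) = x := by rwa [mulVec_mulVec]
  subst hC hz hztil
  have h1 : (fromBlocks (-1) ((-2 : ℂ) • D) 0 1 * fromBlocks 1 0 ((-2 : ℂ) • F) (-1)) *ᵥ
      Sum.elim x (-(F *ᵥ x)) = Sum.elim x (-(F *ᵥ x)) := by
    rw [fromBlocks_multiply, fromBlocks_mulVec]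
    ext (i | j) <;>
      simp [mulVec_add, mulVec_smul, mulVec_neg, add_mulVec, smul_mulVec, neg_mulVec, hDFx, mulVec_mulVec, hx] <;> ring
  have h2 : (fromBlocks (-1) ((-2 : ℂ) • D) 0 1 * fromBlocks 1 0 ((-2 : ℂ) • F) (-1)) *ᵥ
      ((1 / 4 : ℂ) • Sum.elim x (F *ᵥ x)) =
      Sum.elim x (-(F *ᵥ x)) + (1 / 4 : ℂ) • Sum.elim x (F *ᵥ x) := by
    rw [fromBlocks_multiply, mulVec_smul, fromBlocks_mulVec]
    ext (i | j) <;>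
      simp [mulVec_add, mulVec_smul, mulVec_neg, add_mulVec, smul_mulVec, neg_mulVec, hDFx, mulVec_mulVec, hx] <;> ring
  refine ⟨h1, h2, fun hx0 => ?_⟩
  set M := fromBlocks (-1) ((-2 : ℂ) • D) 0 1 * fromBlocks 1 0 ((-2 : ℂ) • F) (-1) with hM
  refine ⟨(1 / 4 : ℂ) • Sum.elim x (F *ᵥ x), ?_, ?_⟩
  · have h3 : (M - 1) *ᵥ ((1 / 4 : ℂ) • Sum.elim x (F *ᵥ x)) = Sum.elim x (-(F *ᵥ x)) := by
      rw [sub_mulVec, h2, one_mulVec]; abel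
    rw [← mulVec_mulVec, h3, sub_mulVec, h1, one_mulVec, sub_self]
  · have h3 : (M - 1) *ᵥ ((1 / 4 : ℂ) • Sum.elim x (F *ᵥ x)) = Sum.elim x (-(F *ᵥ x)) := by
      rw [sub_mulVec, h2, one_mulVec]; abel
    rw [h3]
    intro h
    apply hx0
    ext i
    have := congrFun h (Sum.inl i)
    simpa using this
end

section
/- Suppose that the matrix 2D has integer entries and that the symmetric matrix B = [[I, D],[Dᵀ, I]] is positive semidefinite. Then every complex eigenvalue of the Coxeter transformation C (every complex root of its characteristic polynomial) is a root of unity. This is the statement that the eigenvalues of an affine Coxeter transformation are roots of unity. -/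
open Matrix Polynomial
open scoped ComplexOrder

lemma quad_abs (t : ℝ) (z : ℂ) (ht : |t| ≤ 2) (h : z ^ 2 + (t : ℂ) * z + 1 = 0) :
    ‖z‖ = 1 := by
  have hre := congrArg Complex.re h
  have him := congrArg Complex.im h
  simp [pow_two, Complex.mul_re, Complex.mul_im] at hre him
  obtain ⟨ht1, ht2⟩ := abs_le.mp ht
  have hnorm : z.re * z.re + z.im * z.im = 1 := by
    rcases eq_or_ne z.im 0 with hb | hb
    · rw [hb] at hre ⊢
      have h1 : (z.re * z.re - 1) ^ 2 ≤ 0 := by nlinarith [mul_nonneg (mul_nonneg (by linarith : (0:ℝ) ≤ 2 - t) (by linarith : (0:ℝ) ≤ 2 + t)) (mul_self_nonneg z.re)]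
      have h2 : (z.re * z.re - 1) ^ 2 = 0 := le_antisymm h1 (sq_nonneg _)
      have h3 : z.re * z.re - 1 = 0 := by
        have := sq_eq_zero_iff.mp h2
        linarith
      linarith
    · have htz : t = -2 * z.re := by
        have : z.im * (z.re + z.re + t) = 0 := by ring_nf; ring_nf at him; linarith
        rcases mul_eq_zero.mp this with h' | h'
        · exact absurd h' hb
        · linarith
      nlinarith
  have h0 : 0 ≤ ‖z‖ := norm_nonneg _
  have hsq : ‖z‖ ^ 2 = 1 := by
    rw [Complex.sq_norm, Complex.normSq_apply]; linarith
  nlinarith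

lemma eval_charpoly_det {n : Type*} [Fintype n] [DecidableEq n] (M : Matrix n n ℂ) (z : ℂ) :
    M.charpoly.eval z = (z • (1 : Matrix n n ℂ) - M).det := by
  rw [Matrix.charpoly, ← Polynomial.coe_evalRingHom, RingHom.map_det]
  congr 1
  ext i j
  by_cases hij : i = j <;>
    simp [hij, Matrix.charmatrix_apply, Matrix.one_apply, Matrix.smul_apply]

open scoped MatrixOrder in
lemma psd_exists_mul {n : Type*} [Fintype n] [DecidableEq n] (M : Matrix n n ℝ)
    (h : M.PosSemidef) : ∃ A : Matrix n n ℝ, M = Aᴴ * A :=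
  CStarAlgebra.nonneg_iff_eq_star_mul_self.mp h.nonneg

lemma circ (m k : ℕ) (D : Matrix (Fin m) (Fin k) ℝ)
    (hposB : (fromBlocks 1 D Dᵀ 1).PosSemidef) (z : ℂ)
    (hroot : (((fromBlocks (-1) ((-2 : ℝ) • D) 0 1 *
        fromBlocks 1 0 ((-2 : ℝ) • Dᵀ) (-1)).map Complex.ofReal)).charpoly.IsRoot z) :
    ‖z‖ = 1 := by
  rcases eq_or_ne z (-1) with rfl | hz1
  · simp
  set Dc : Matrix (Fin m) (Fin k) ℂ := D.map Complex.ofReal with hDc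
  -- the complexified Coxeter matrix
  set Cc := ((fromBlocks (-1) ((-2 : ℝ) • D) 0 1 *
      fromBlocks 1 0 ((-2 : ℝ) • Dᵀ) (-1)).map Complex.ofReal) with hCc
  have hCcEq : Cc = fromBlocks (-1) ((-2 : ℂ) • Dc) 0 1 * fromBlocks 1 0 ((-2 : ℂ) • Dcᵀ) (-1) := by
    rw [hCc, show (Complex.ofReal : ℝ → ℂ) = ⇑Complex.ofRealHom from rfl, Matrix.map_mul]
    congr 1 <;> ext (i | i) (j | j) <;>
      simp [Matrix.fromBlocks, Matrix.one_apply, apply_ite, hDc]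
  -- get an eigenvector
  have hdet : (z • (1 : Matrix (Fin m ⊕ Fin k) (Fin m ⊕ Fin k) ℂ) - Cc).det = 0 := by
    rw [← eval_charpoly_det]; exact hroot
  obtain ⟨v, hvne, hv⟩ := Matrix.exists_mulVec_eq_zero_iff.mpr hdet
  have hCv : Cc *ᵥ v = z • v := by
    have h1 : (z • (1 : Matrix (Fin m ⊕ Fin k) (Fin m ⊕ Fin k) ℂ)) *ᵥ v - Cc *ᵥ v = 0 := by
      rw [← Matrix.sub_mulVec]; exact hv
    have h2 := sub_eq_zero.mp h1
    rwa [Matrix.smul_mulVec, Matrix.one_mulVec, eq_comm] at h2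
  set x : Fin m → ℂ := fun i => v (Sum.inl i) with hx
  set y : Fin k → ℂ := fun j => v (Sum.inr j) with hy
  have hveq : v = Sum.elim x y := by funext i; cases i <;> rfl
  set w : Fin k → ℂ := Dcᵀ *ᵥ x with hw
  -- the two block equations
  have hW2v : (fromBlocks 1 0 ((-2 : ℂ) • Dcᵀ) (-1)) *ᵥ v
      = Sum.elim x ((-2 : ℂ) • w - y) := by
    rw [hveq, Matrix.fromBlocks_mulVec]
    funext i
    cases i with
    | inl i => simp
    | inr j => simp [Matrix.neg_mulVec, Matrix.smul_mulVec, hw, sub_eq_add_neg]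
  have hmain : Sum.elim (-x - (2 : ℂ) • (Dc *ᵥ ((-2 : ℂ) • w - y))) ((-2 : ℂ) • w - y)
      = Sum.elim (z • x) (z • y) := by
    have h3 : (fromBlocks (-1) ((-2 : ℂ) • Dc) 0 1) *ᵥ (Sum.elim x ((-2 : ℂ) • w - y))
        = z • v := by rw [← hW2v, Matrix.mulVec_mulVec, ← hCcEq]; exact hCv
    rw [Matrix.fromBlocks_mulVec] at h3
    rw [hveq] at h3
    convert h3 using 2
    · simp [Matrix.neg_mulVec, Matrix.smul_mulVec, smul_smul]
      module
    · simp
    · funext i; cases i <;> simp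
  have hE1 : -x - (2 : ℂ) • (Dc *ᵥ ((-2 : ℂ) • w - y)) = z • x := by
    funext i; exact congrFun hmain (Sum.inl i)
  have hE2 : (-2 : ℂ) • w - y = z • y := by
    funext j; exact congrFun hmain (Sum.inr j)
  have hE2' : (-2 : ℂ) • w = (z + 1) • y := by
    funext j
    have h := congrFun hE2 j
    simp only [Pi.smul_apply, Pi.sub_apply, Pi.neg_apply, smul_eq_mul] at h ⊢
    linear_combination h
  rw [hE2, Matrix.mulVec_smul] at hE1
  have h4 : (z + 1) • x = (-2 * z) • (Dc *ᵥ y) := by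
    funext i
    have h := congrFun hE1 i
    simp only [Pi.smul_apply, Pi.sub_apply, Pi.neg_apply, smul_eq_mul] at h ⊢
    linear_combination -h
  have hkey : ((z + 1) ^ 2) • x = (4 * z) • (Dc *ᵥ w) := by
    calc ((z + 1) ^ 2) • x = (z + 1) • ((z + 1) • x) := by rw [smul_smul]; module
    _ = (z + 1) • ((-2 * z) • (Dc *ᵥ y)) := by rw [h4]
    _ = (-2 * z) • (Dc *ᵥ ((z + 1) • y)) := by
        rw [Matrix.mulVec_smul, smul_smul, smul_smul]; module
    _ = (-2 * z) • (Dc *ᵥ ((-2 : ℂ) • w)) := by rw [← hE2']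
    _ = (4 * z) • (Dc *ᵥ w) := by rw [Matrix.mulVec_smul, smul_smul]; module
  have hxne : x ≠ 0 := by
    intro h0
    apply hvne
    have hw0 : w = 0 := by rw [hw, h0, Matrix.mulVec_zero]
    have hy0 : y = 0 := by
      rw [hw0] at hE2'
      simp only [smul_zero] at hE2'
      rcases smul_eq_zero.mp hE2'.symm with h | h
      · exact absurd (by linear_combination h) hz1
      · exact h
    rw [hveq, h0, hy0]
    funext i; cases i <;> rfl
  set b' : ℝ := ∑ i, Complex.normSq (x i) with hb'
  set a' : ℝ := ∑ j, Complex.normSq (w j) with ha'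
  have hdotgen : ∀ {n : Type} [Fintype n] (u : n → ℂ),
      star u ⬝ᵥ u = ((∑ i, Complex.normSq (u i) : ℝ) : ℂ) := by
    intro n _ u
    rw [Complex.ofReal_sum]
    simp [dotProduct, Complex.normSq_eq_conj_mul_self]
  have hbx : star x ⬝ᵥ x = (b' : ℂ) := hdotgen x
  have hsw : star x ᵥ* Dc = star w := by
    funext j
    simp [Matrix.vecMul, Matrix.mulVec, dotProduct, hw, hDc, map_sum, Complex.conj_ofReal,
      mul_comm]
  have haw : star x ⬝ᵥ (Dc *ᵥ w) = (a' : ℂ) := by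
    rw [Matrix.dotProduct_mulVec, hsw, hdotgen w]
  have hnum : ((z + 1) ^ 2) * (b' : ℂ) = (4 * z) * (a' : ℂ) := by
    have h := congrArg (fun u => star x ⬝ᵥ u) hkey
    simpa [dotProduct_smul, smul_eq_mul, hbx, haw] using h
  have hb'pos : 0 < b' := by
    obtain ⟨i, hi⟩ := Function.ne_iff.mp hxne
    exact Finset.sum_pos' (fun i _ => Complex.normSq_nonneg _)
      ⟨i, Finset.mem_univ i, Complex.normSq_pos.mpr hi⟩
  have ha'nonneg : 0 ≤ a' := Finset.sum_nonneg fun j _ => Complex.normSq_nonneg _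
  -- PSD of complexified B gives a' ≤ b'
  have hBc : (fromBlocks (1 : Matrix (Fin m) (Fin m) ℂ) Dc Dcᵀ 1).PosSemidef := by
    obtain ⟨A, hA⟩ : ∃ A : Matrix (Fin m ⊕ Fin k) (Fin m ⊕ Fin k) ℝ, fromBlocks 1 D Dᵀ 1 = Aᴴ * A :=
      psd_exists_mul _ hposB
    have h1 : fromBlocks (1 : Matrix (Fin m) (Fin m) ℂ) Dc Dcᵀ 1
        = (fromBlocks 1 D Dᵀ 1).map ⇑Complex.ofRealHom := by
      ext (i | i) (j | j) <;> simp [Matrix.fromBlocks, Matrix.one_apply, apply_ite, hDc]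
    have h2 : Aᴴ.map ⇑Complex.ofRealHom = (A.map ⇑Complex.ofRealHom)ᴴ :=
      Matrix.conjTranspose_map _ fun a => (Complex.conj_ofReal a).symm
    rw [h1, hA, Matrix.map_mul, h2]
    exact Matrix.posSemidef_conjTranspose_mul_self _
  have hab : a' ≤ b' := by
    have h0 := hBc.dotProduct_mulVec_nonneg (Sum.elim x (-w))
    have hmv : (fromBlocks (1 : Matrix (Fin m) (Fin m) ℂ) Dc Dcᵀ 1) *ᵥ Sum.elim x (-w)
        = Sum.elim (x - Dc *ᵥ w) 0 := by
      rw [Matrix.fromBlocks_mulVec]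
      funext i
      cases i with
      | inl i => simp [Matrix.mulVec_neg, sub_eq_add_neg]
      | inr j => simp [hw, Matrix.mulVec_neg]
    rw [hmv, Function.star_sumElim, sumElim_dotProduct_sumElim] at h0
    simp only [dotProduct_sub, hbx, haw, dotProduct_zero, add_zero] at h0
    have h0' : (0 : ℂ) ≤ ((b' - a' : ℝ) : ℂ) := by push_cast; exact h0
    have := Complex.zero_le_real.mp h0'
    linarith
  -- conclude with the quadratic lemma
  have hbne : (b' : ℂ) ≠ 0 := by
    exact_mod_cast ne_of_gt hb'pos
  have heq : z ^ 2 + ((2 - 4 * (a' / b') : ℝ) : ℂ) * z + 1 = 0 := by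
    push_cast
    field_simp
    ring_nf
    ring_nf at hnum
    linear_combination hnum
  have hts : |2 - 4 * (a' / b')| ≤ 2 := by
    rw [abs_le]
    have h1 : 0 ≤ a' / b' := div_nonneg ha'nonneg hb'pos.le
    have h2 : a' / b' ≤ 1 := (div_le_one hb'pos).mpr hab
    constructor <;> linarith
  exact quad_abs _ z hts heq


/-- If `2D` has integer entries and `B = [[I,D],[Dᵀ,I]]` is positive
semidefinite (the extended Dynkin diagram case), then every complex eigenvalue of the
(affine) Coxeter transformation `C` is a root of unity. -/
theorem stmt_11 (m k : ℕ) (hm : 0 < m) (hk : 0 < k)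
    (D : Matrix (Fin m) (Fin k) ℝ)
    (hint : ∀ i j, ∃ n : ℤ, 2 * D i j = (n : ℝ))
    (C : Matrix (Fin m ⊕ Fin k) (Fin m ⊕ Fin k) ℝ)
    (hC : C = fromBlocks (-1) ((-2 : ℝ) • D) 0 1 * fromBlocks 1 0 ((-2 : ℝ) • Dᵀ) (-1))
    (B : Matrix (Fin m ⊕ Fin k) (Fin m ⊕ Fin k) ℝ)
    (hB : B = fromBlocks 1 D Dᵀ 1)
    (hposB : B.PosSemidef) :
    ∀ μ : ℂ, (C.map Complex.ofReal).charpoly.IsRoot μ →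
      ∃ n : ℕ, 0 < n ∧ μ ^ n = 1 := by
  intro μ hμ
  -- an integer model of the Coxeter matrix
  choose N hN using hint
  set Nm : Matrix (Fin m) (Fin k) ℤ := fun i j => N i j with hNm
  set Cint : Matrix (Fin m ⊕ Fin k) (Fin m ⊕ Fin k) ℤ :=
    fromBlocks (-1) (-Nm) 0 1 * fromBlocks 1 0 (-Nmᵀ) (-1) with hCint
  have key : ∀ (i : Fin m) (j : Fin k), ((N i j : ℤ) : ℂ) = 2 * (D i j : ℂ) := by
    intro i j
    have hc := congrArg Complex.ofReal (hN i j)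
    push_cast at hc ⊢
    linear_combination -hc
  have hmap : Cint.map ⇑(Int.castRingHom ℂ) = C.map Complex.ofReal := by
    rw [hCint, hC, Matrix.map_mul,
      show (Complex.ofReal : ℝ → ℂ) = ⇑Complex.ofRealHom from rfl, Matrix.map_mul]
    congr 1 <;> ext (i | i) (j | j) <;>
      simp [Matrix.fromBlocks, Matrix.one_apply, apply_ite, show ∀ i j, Nm i j = N i j from fun _ _ => rfl, Matrix.neg_apply,
        Matrix.transpose_apply] <;>
      first
      | linear_combination key i j
      | linear_combination key j i
  set p : Polynomial ℤ := Cint.charpoly with hp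
  have hcp : (C.map Complex.ofReal).charpoly = p.map (Int.castRingHom ℂ) := by
    rw [← hmap, Matrix.charpoly_map]
  -- all roots of `p` over ℂ lie on the unit circle
  have hcircAll : ∀ z : ℂ, (p.map (Int.castRingHom ℂ)).IsRoot z → ‖z‖ = 1 := by
    intro z hz
    refine circ m k D (hB ▸ hposB) z ?_
    rw [← hC, hcp]
    exact hz
  have hμ' : (p.map (Int.castRingHom ℂ)).IsRoot μ := by rwa [← hcp]
  -- μ is an algebraic integer
  have hμint : IsIntegral ℤ μ := by
    refine ⟨p, Cint.charpoly_monic, ?_⟩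
    rwa [← Polynomial.aeval_def, Polynomial.aeval_def, ← Polynomial.eval_map]
  -- work in the number field ℚ(μ)
  haveI : FiniteDimensional ℚ (IntermediateField.adjoin ℚ {μ}) :=
    IntermediateField.adjoin.finiteDimensional (hμint.tower_top (A := ℚ))
  haveI : NumberField (IntermediateField.adjoin ℚ {μ}) := ⟨⟩
  set K := IntermediateField.adjoin ℚ {μ} with hK
  set x : K := IntermediateField.AdjoinSimple.gen ℚ μ with hxdef
  have halg : algebraMap K ℂ x = μ := IntermediateField.AdjoinSimple.algebraMap_gen ℚ μ
  have hinj : Function.Injective (algebraMap K ℂ) := (algebraMap K ℂ).injective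
  have hxint : IsIntegral ℤ x := by
    rw [← isIntegral_algebraMap_iff hinj, halg]; exact hμint
  have hax : Polynomial.aeval x p = 0 := by
    apply hinj
    rw [map_zero, ← Polynomial.aeval_algebraMap_apply, halg]
    rw [Polynomial.aeval_def, ← Polynomial.eval_map]
    exact hμ'
  have hnorms : ∀ φ : K →+* ℂ, ‖φ x‖ = 1 := by
    intro φ
    have h1 : Polynomial.aeval (φ x) p = 0 := by
      rw [show φ x = φ.toIntAlgHom x from rfl, Polynomial.aeval_algHom_apply, hax, map_zero]
    have h2 : (p.map (Int.castRingHom ℂ)).IsRoot (φ x) := by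
      rwa [Polynomial.IsRoot, Polynomial.eval_map, ← algebraMap_int_eq, ← Polynomial.aeval_def]
    exact hcircAll _ h2
  obtain ⟨n, hn, hxn⟩ :=
    NumberField.Embeddings.pow_eq_one_of_norm_eq_one K ℂ hxint hnorms
  exact ⟨n, hn, by rw [← halg, ← map_pow, hxn, _root_.map_one]⟩
end

section
/- Let n ≥ 1, let K be the n×n Cartan matrix of the Dynkin diagram A_n (K_{ii} = 2, K_{ij} = −1 when |i − j| = 1, and K_{ij} = 0 otherwise), and let C(K) be its Coxeter transformation. Then the characteristic polynomial of C(K) equals 1 + X + X² + ⋯ + Xⁿ. -/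
open Matrix Polynomial


/-- The charmatrix of the Coxeter transformation of `A_n`, written explicitly. -/
noncomputable def MmatAux (n : ℕ) : Matrix (Fin n) (Fin n) (Polynomial ℤ) := fun a b =>
  (if a = b then X else 0) - (if (a : ℕ) = (b : ℕ) + 1 then 1 else 0)
    + (if (b : ℕ) + 1 = n then 1 else 0)

/-- Partial products of the simple reflections. -/
def PmatAux (n k : ℕ) : Matrix (Fin n) (Fin n) ℤ := fun a b =>
  if (a : ℕ) < k then
    (if (a : ℕ) = (b : ℕ) + 1 then 1 else 0) - (if (b : ℕ) + 1 = k then 1 else 0)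
      + (if (b : ℕ) = k then 1 else 0)
  else (if a = b then 1 else 0)

lemma detMmatAux : ∀ n, (MmatAux n).det = ∑ i ∈ Finset.range (n + 1), X ^ i := by
  intro n
  induction n with
  | zero => simp [Matrix.det_isEmpty]
  | succ m ih =>
    match m, ih with
    | 0, _ =>
      rw [show (MmatAux 1).det = MmatAux 1 0 0 from Matrix.det_fin_one _]
      simp [MmatAux, Finset.sum_range_succ]
      ring
    | (p+1), ih =>
      rw [Matrix.det_succ_row_zero]
      have hsub0 : (MmatAux (p+2)).submatrix Fin.succ ((0 : Fin (p+2)).succAbove)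
          = MmatAux (p+1) := by
        rw [Fin.succAbove_zero]
        ext a b
        simp only [MmatAux, Matrix.submatrix_apply, Fin.ext_iff, Fin.val_succ]
        split_ifs <;> first | rfl | omega
      have hsublast :
          ((MmatAux (p+2)).submatrix Fin.succ ((Fin.last (p+1)).succAbove)).det
            = (-1 : Polynomial ℤ) ^ (p+1) := by
        rw [Fin.succAbove_last]
        have hut : ((MmatAux (p+2)).submatrix Fin.succ Fin.castSucc).BlockTriangular id := by
          intro a b hba
          simp only [id] at hba
          simp only [MmatAux, Matrix.submatrix_apply]
          have h1 : ¬ (a.succ = b.castSucc) := by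
            simp [Fin.ext_iff, Fin.val_succ]; omega
          have h2 : ¬ ((a.succ : ℕ) = (b.castSucc : ℕ) + 1) := by
            simp [Fin.val_succ]; omega
          have h3 : ¬ ((b.castSucc : ℕ) + 1 = p + 2) := by
            simp; omega
          rw [if_neg h1, if_neg h2, if_neg h3]
          ring
        rw [Matrix.det_of_upperTriangular hut]
        have : ∀ i : Fin (p+1),
            ((MmatAux (p+2)).submatrix Fin.succ Fin.castSucc) i i = -1 := by
          intro i
          simp only [MmatAux, Matrix.submatrix_apply]
          have h1 : ¬ (i.succ = i.castSucc) := by simp [Fin.ext_iff]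
          have h2 : ((i.succ : ℕ) = (i.castSucc : ℕ) + 1) := by simp
          have h3 : ¬ ((i.castSucc : ℕ) + 1 = p + 2) := by simp; omega
          rw [if_neg h1, if_pos h2, if_neg h3]
          ring
        calc ∏ i : Fin (p+1), ((MmatAux (p+2)).submatrix Fin.succ Fin.castSucc) i i
            = ∏ _i : Fin (p+1), (-1 : Polynomial ℤ) := Finset.prod_congr rfl (fun i _ => this i)
          _ = (-1) ^ (p+1) := by simp
      have hf : ∀ j : Fin (p+2),
          (-1 : Polynomial ℤ) ^ (j : ℕ) * MmatAux (p+2) 0 j *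
            ((MmatAux (p+2)).submatrix Fin.succ j.succAbove).det
          = (if j = 0 then X * (MmatAux (p+1)).det else 0)
            + (if j = Fin.last (p+1) then 1 else 0) := by
        intro j
        by_cases h0 : j = 0
        · subst h0
          have hlast : (0 : Fin (p+2)) ≠ Fin.last (p+1) := by
            simp [Fin.ext_iff]
          rw [if_pos rfl, if_neg hlast, hsub0]
          have : MmatAux (p+2) 0 0 = X := by
            simp [MmatAux]
          rw [this]
          simp
        · by_cases hl : j = Fin.last (p+1)
          · subst hl
            rw [if_neg h0, if_pos rfl, hsublast]
            have : MmatAux (p+2) 0 (Fin.last (p+1)) = 1 := by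
              have : ¬ ((0 : Fin (p+2)) = Fin.last (p+1)) := by simp [Fin.ext_iff]
              simp [MmatAux, this]
            rw [this]
            rw [Fin.val_last, mul_one, ← pow_add,
              show (p+1)+(p+1) = 2*(p+1) by ring, pow_mul]
            simp
          · have : MmatAux (p+2) 0 j = 0 := by
              have h1 : ¬ ((0 : Fin (p+2)) = j) := fun h => h0 h.symm
              have h2 : ¬ ((0 : Fin (p+2)) : ℕ) = (j : ℕ) + 1 := by simp
              have h3 : ¬ ((j : ℕ) + 1 = p + 2) := by
                intro h
                apply hl
                simp [Fin.ext_iff, Fin.val_last]; omega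
              simp [MmatAux, h1, h2, h3]
              omega
            rw [this, if_neg h0, if_neg hl]
            ring
      rw [Finset.sum_congr rfl (fun j _ => hf j), Finset.sum_add_distrib,
        Finset.sum_ite_eq' Finset.univ (0 : Fin (p+2)),
        Finset.sum_ite_eq' Finset.univ (Fin.last (p+1))]
      simp only [Finset.mem_univ, if_pos, ih]
      rw [show p+1+1+1 = (p+2)+1 from rfl,
        Finset.sum_range_succ' (fun i => (X : Polynomial ℤ) ^ i) (p+2)]
      rw [Finset.mul_sum]
      simp [pow_succ, mul_comm]

set_option maxHeartbeats 1000000 in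
lemma entry_step (n k a b : ℕ) (hk : k < n) (ha : a < n) (hb : b < n) :
    (if a < k then
        (if a = b + 1 then (1:ℤ) else 0) - (if b + 1 = k then 1 else 0)
          + (if b = k then 1 else 0)
      else (if a = b then 1 else 0))
      - (if a ≤ k then (1:ℤ) else 0)
        * (if k = b then 2 else if k + 1 = b ∨ b + 1 = k then -1 else 0)
    = (if a < k + 1 then
        (if a = b + 1 then (1:ℤ) else 0) - (if b + 1 = k + 1 then 1 else 0)
          + (if b = k + 1 then 1 else 0)
      else (if a = b then 1 else 0)) := by
  split_ifs <;> omega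

/-- For `n ≥ 1` and `K` the Cartan matrix of the Dynkin diagram `A_n`,
the characteristic polynomial of the Coxeter transformation
`C(K) = R₁·R₂·⋯·R_n` equals `1 + X + X² + ⋯ + Xⁿ`. -/
theorem stmt_13 (n : ℕ) (hn : 1 ≤ n)
    (K : Matrix (Fin n) (Fin n) ℤ)
    (hK : ∀ i j : Fin n, K i j =
      if i = j then 2
      else if (i : ℕ) + 1 = (j : ℕ) ∨ (j : ℕ) + 1 = (i : ℕ) then -1 else 0)
    (R : Fin n → Matrix (Fin n) (Fin n) ℤ)
    (hR : ∀ i a b : Fin n, R i a b =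
      if a = i then (if i = b then 1 else 0) - K i b else (if a = b then 1 else 0))
    (C : Matrix (Fin n) (Fin n) ℤ)
    (hC : C = (List.ofFn fun i => R i).prod) :
    C.charpoly = ∑ i ∈ Finset.range (n + 1), X ^ i := by
  -- Step 1: compute the partial products of the reflections.
  have key : ∀ k, k ≤ n → ((List.ofFn fun i => R i).take k).prod = PmatAux n k := by
    intro k
    induction k with
    | zero =>
      intro _
      ext a b
      simp [PmatAux, Matrix.one_apply]
    | succ k ih =>
      intro hk
      have hk' : k < n := Nat.lt_of_succ_le hk
      have hklen : k < (List.ofFn fun i => R i).length := by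
        simpa using hk'
      rw [List.prod_take_succ _ k hklen, ih (Nat.le_of_succ_le hk)]
      have hget : (List.ofFn fun i => R i)[k] = R ⟨k, hk'⟩ := by
        simp
      rw [hget]
      ext a b
      rw [Matrix.mul_apply]
      have hRrow : ∀ c, R ⟨k, hk'⟩ c b
          = (if c = b then (1:ℤ) else 0) - (if c = (⟨k, hk'⟩ : Fin n) then K ⟨k, hk'⟩ b else 0) := by
        intro c
        by_cases hc : c = (⟨k, hk'⟩ : Fin n)
        · subst hc
          rw [hR]
          simp
        · rw [hR, if_neg hc, if_neg hc]
          simp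
      calc (∑ c, PmatAux n k a c * R ⟨k, hk'⟩ c b)
          = ∑ c, ((if c = b then PmatAux n k a c else 0)
              - (if c = (⟨k, hk'⟩ : Fin n) then PmatAux n k a c * K ⟨k, hk'⟩ b else 0)) := by
            refine Finset.sum_congr rfl fun c _ => ?_
            rw [hRrow c]
            simp [mul_sub, mul_ite]
        _ = PmatAux n k a b - PmatAux n k a ⟨k, hk'⟩ * K ⟨k, hk'⟩ b := by
            rw [Finset.sum_sub_distrib, Finset.sum_ite_eq' Finset.univ b,
              Finset.sum_ite_eq' Finset.univ (⟨k, hk'⟩ : Fin n)]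
            simp
        _ = PmatAux n (k+1) a b := by
            have hak : PmatAux n k a ⟨k, hk'⟩ = if (a : ℕ) ≤ k then 1 else 0 := by
              simp only [PmatAux, Fin.ext_iff, Fin.val_mk]
              split_ifs <;> omega
            rw [hak, hK]
            simp only [PmatAux, Fin.ext_iff, Fin.val_mk]
            exact entry_step n k a b hk' a.isLt b.isLt
  -- Step 2: explicit form of C.
  have hlen : (List.ofFn fun i => R i).length = n := by simp
  have hCP : C = PmatAux n n := by
    have h := key n le_rfl
    rw [List.take_of_length_le (le_of_eq hlen)] at h
    rw [hC, h]
  -- Step 3: identify the charmatrix with MmatAux.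
  have hchar : charmatrix C = MmatAux n := by
    ext a b
    have hCab : C a b = (if (a : ℕ) = (b : ℕ) + 1 then 1 else 0)
        - (if (b : ℕ) + 1 = n then 1 else 0) := by
      rw [hCP]
      simp only [PmatAux, Fin.ext_iff]
      split_ifs <;> omega
    by_cases hab : a = b
    · subst hab
      rw [charmatrix_apply_eq, hCab, MmatAux]
      simp only [Fin.ext_iff]
      split_ifs <;> first | (exfalso; omega) | (simp; try ring)
    · rw [charmatrix_apply_ne _ _ _ hab, hCab, MmatAux]
      have hab' : ¬ ((a : ℕ) = (b : ℕ)) := fun h => hab (Fin.ext h)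
      simp only [Fin.ext_iff]
      split_ifs <;> first | (exfalso; omega) | (simp; try ring)
  rw [Matrix.charpoly, hchar, detMmatAux]
end

section
/- Let m ≥ 3 and let K be the (m+3)×(m+3) Cartan matrix of the tree T_{2,3,m} (a central vertex with three attached paths consisting of 1, 2, and m−1 vertices respectively; K has 2's on the diagonal, −1 at each pair of adjacent vertices, and 0 elsewhere). Then the characteristic polynomial of the Coxeter transformation C(K) equals X^{m+3} + X^{m+2} − (X³ + X⁴ + ⋯ + X^m) + X + 1. -/
open Matrix Polynomial

set_option maxHeartbeats 1000000

def Edge (i j : ℕ) : Prop :=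
  (i = 0 ∧ j = 1) ∨ (i = 0 ∧ j = 2) ∨ (i = 2 ∧ j = 3) ∨ (i = 0 ∧ j = 4) ∨ (4 ≤ i ∧ j = i + 1)

instance Edge.dec : ∀ i j, Decidable (Edge i j) := fun i j => by unfold Edge; infer_instance

lemma Edge.lt {i j : ℕ} (h : Edge i j) : i < j := by unfold Edge at h; omega

def Km (n : ℕ) : Matrix (Fin n) (Fin n) ℤ :=
  .of fun i j => if i = j then 2 else if Edge i.1 j.1 ∨ Edge j.1 i.1 then -1 else 0

def Bm (n : ℕ) : Matrix (Fin n) (Fin n) ℤ :=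
  .of fun i j => if i = j then 1 else if Edge i.1 j.1 then -1 else 0

noncomputable def nnf (i j : ℕ) : ℤ[X] :=
  if i = j then X + 1 else if Edge i j then -X else if Edge j i then -1 else 0

noncomputable def NN (n : ℕ) : Matrix (Fin n) (Fin n) ℤ[X] := .of fun i j => nnf i j

lemma not_edge_both {i j : ℕ} (h1 : Edge i j) (h2 : Edge j i) : False :=
  absurd (h1.lt.trans h2.lt) (lt_irrefl _)

lemma Bm_sub_Km (n : ℕ) : Bm n - Km n = -(Bm n)ᵀ := by
  ext i j
  simp only [Bm, Km, Matrix.sub_apply, Matrix.neg_apply, Matrix.transpose_apply, Matrix.of_apply]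
  rcases eq_or_ne i j with rfl | hij
  · norm_num
  · have hij' : j ≠ i := hij.symm
    rw [if_neg hij, if_neg hij, if_neg hij']
    by_cases h1 : Edge i.1 j.1
    · have h2 : ¬ Edge j.1 i.1 := fun h => not_edge_both h1 h
      simp [h1, h2]
    · by_cases h2 : Edge j.1 i.1 <;> simp [h1, h2]

lemma col_lemma (n : ℕ) (a l : Fin n) :
    Bm n a l - (if a.1 < l.1 then Km n a l else 0) = if a = l then (1:ℤ) else 0 := by
  simp only [Bm, Km, Matrix.of_apply]
  rcases lt_trichotomy a.1 l.1 with h | h | h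
  · have hne : a ≠ l := fun e => by rw [e] at h; omega
    have h2 : ¬ Edge l.1 a.1 := fun e => by have := e.lt; omega
    by_cases h1 : Edge a.1 l.1 <;> simp [hne, h, h1, h2]
  · have he : a = l := Fin.ext h
    have hlt : ¬ (a.1 < l.1) := by omega
    simp [he, hlt]
  · have hne : a ≠ l := fun e => by rw [e] at h; omega
    have h1 : ¬ Edge a.1 l.1 := fun e => by have := e.lt; omega
    have hlt : ¬ (a.1 < l.1) := by omega
    simp [hne, h1, hlt]

lemma key_lemma {n : ℕ} (R : Fin n → Matrix (Fin n) (Fin n) ℤ)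
    (hR : ∀ i : Fin n, R i = 1 - Matrix.single i i 1 * Km n) :
    Bm n * (List.ofFn R).prod = -(Bm n)ᵀ := by
  have H : ∀ l : ℕ, l ≤ n → Bm n * ((List.ofFn R).take l).prod =
      Bm n - Matrix.of (fun a b => if a.1 < l then Km n a b else 0) := by
    intro l
    induction l with
    | zero =>
      intro _
      simp only [List.take_zero, List.prod_nil, Matrix.mul_one]
      ext a b
      simp
    | succ l ih =>
      intro hl
      have hl' : l ≤ n := by omega
      have hlen : l < (List.ofFn R).length := by simpa using hl
      rw [List.prod_take_succ _ l hlen, ← Matrix.mul_assoc, ih hl']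
      have hget : (List.ofFn R)[l] = R ⟨l, by omega⟩ := List.getElem_ofFn _
      rw [hget, hR ⟨l, by omega⟩]
      have hcol : (Bm n - Matrix.of (fun a b => if a.1 < l then Km n a b else 0)) *
          Matrix.single (⟨l, by omega⟩ : Fin n) ⟨l, by omega⟩ 1 =
          Matrix.single (⟨l, by omega⟩ : Fin n) ⟨l, by omega⟩ 1 := by
        ext a b
        by_cases hb : b = (⟨l, by omega⟩ : Fin n)
        · rw [hb, Matrix.mul_single_apply_same, mul_one]
          have hc := col_lemma n a (⟨l, by omega⟩ : Fin n)
          simp only [Matrix.sub_apply, Matrix.of_apply] at hc ⊢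
          rw [hc]
          simp [Matrix.single, eq_comm]
        · rw [Matrix.mul_single_apply_of_ne _ _ _ _ _ hb]
          simp only [Matrix.single, Matrix.of_apply]
          rw [if_neg (fun h => hb h.2.symm)]
      rw [Matrix.mul_sub, Matrix.mul_one, ← Matrix.mul_assoc, hcol]
      ext u v
      simp only [Matrix.sub_apply, Matrix.of_apply]
      by_cases ha : u = (⟨l, by omega⟩ : Fin n)
      · rw [ha, Matrix.single_mul_apply_same, one_mul]
        have h1 : ¬ ((⟨l, by omega⟩ : Fin n) : ℕ) < l := by simp
        have h2 : ((⟨l, by omega⟩ : Fin n) : ℕ) < l + 1 := by simp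
        rw [if_neg h1, if_pos h2]
        ring
      · rw [Matrix.single_mul_apply_of_ne _ _ _ _ _ ha]
        have hne : (u : ℕ) ≠ l := fun e => ha (Fin.ext e)
        by_cases h3 : (u:ℕ) < l
        · rw [if_pos h3, if_pos (by omega)]; ring
        · rw [if_neg h3, if_neg (by omega)]; ring
  have hfull := H n (le_refl n)
  have htake : (List.ofFn R).take n = List.ofFn R := by
    apply List.take_of_length_le; simp
  rw [htake] at hfull
  rw [hfull]
  have : Matrix.of (fun a b : Fin n => if a.1 < n then Km n a b else 0) = Km n := by
    ext a b; simp [a.isLt]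
  rw [this, Bm_sub_Km]

lemma Bm_det_one (n : ℕ) : ((Bm n).map (Polynomial.C : ℤ →+* ℤ[X])).det = 1 := by
  rw [Matrix.det_of_upperTriangular]
  · rw [Finset.prod_eq_one]
    intro i _
    simp [Bm, Matrix.map_apply]
  · intro i j hij
    have hij' : (j : ℕ) < i := hij
    have hne : i ≠ j := fun e => by rw [e] at hij'; omega
    have hE : ¬ Edge i.1 j.1 := fun e => by have := e.lt; omega
    simp [Bm, Matrix.map_apply, hne, hE]

lemma charpoly_eq_detNN {n : ℕ} (Cmat : Matrix (Fin n) (Fin n) ℤ)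
    (h : Bm n * Cmat = -(Bm n)ᵀ) : Cmat.charpoly = (NN n).det := by
  unfold Matrix.charpoly
  have h1 : (charmatrix Cmat).det = ((Bm n).map (Polynomial.C : ℤ →+* ℤ[X])).det *
      (charmatrix Cmat).det := by rw [Bm_det_one, one_mul]
  rw [h1, ← Matrix.det_mul]
  congr 1
  have hmul : ((Bm n).map (Polynomial.C : ℤ →+* ℤ[X])) * (Cmat.map (Polynomial.C : ℤ →+* ℤ[X]))
      = ((-(Bm n)ᵀ).map (Polynomial.C : ℤ →+* ℤ[X])) := by
    rw [← Matrix.map_mul, h]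
  unfold charmatrix
  have hCm : (RingHom.mapMatrix (Polynomial.C : ℤ →+* ℤ[X])) Cmat
      = Cmat.map (Polynomial.C : ℤ →+* ℤ[X]) := rfl
  rw [Matrix.mul_sub, hCm, hmul]
  refine Matrix.ext fun i j => ?_
  rw [Matrix.sub_apply, Matrix.scalar_apply, Matrix.mul_diagonal]
  simp only [Matrix.map_apply, Matrix.neg_apply, Matrix.transpose_apply, NN, nnf, Bm,
    Matrix.of_apply]
  rcases eq_or_ne i j with rfl | hij
  · have : ¬ ((i:ℕ) ≠ (i:ℕ)) := by omega
    simp [mul_comm]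
  · have hij' : j ≠ i := hij.symm
    have hv : (i:ℕ) ≠ (j:ℕ) := fun e => hij (Fin.ext e)
    rw [if_neg hij, if_neg hij', if_neg hv]
    by_cases h1 : Edge i.1 j.1
    · have h2 : ¬ Edge j.1 i.1 := fun hh => not_edge_both h1 hh
      simp [h1, h2]
    · by_cases h2 : Edge j.1 i.1 <;> simp [h1, h2]

lemma succAbove_val {n : ℕ} (p : Fin (n+1)) (i : Fin n) :
    ((p.succAbove i : Fin (n+1)) : ℕ) = if (i:ℕ) < (p:ℕ) then (i:ℕ) else (i:ℕ)+1 := by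
  rcases lt_or_ge (i:ℕ) (p:ℕ) with h | h
  · rw [Fin.succAbove_of_castSucc_lt p i (by simpa [Fin.lt_def] using h), if_pos h,
      Fin.coe_castSucc]
  · rw [Fin.succAbove_of_le_castSucc p i (by simpa [Fin.le_def] using h),
      if_neg (by omega), Fin.val_succ]

lemma NN_apply (n : ℕ) (i j : Fin n) : NN n i j = nnf i.1 j.1 := rfl

lemma nnf_diag {a b : ℕ} (h : a = b) : nnf a b = X + 1 := by rw [nnf, if_pos h]

lemma nnf_up {a b : ℕ} (h : Edge a b) : nnf a b = -X := by
  rw [nnf, if_neg (by have := h.lt; omega), if_pos h]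

lemma nnf_down {a b : ℕ} (h : Edge b a) : nnf a b = -1 := by
  rw [nnf, if_neg (by have := h.lt; omega), if_neg (fun h2 => not_edge_both h2 h), if_pos h]

lemma nnf_zero {a b : ℕ} (h1 : a ≠ b) (h2 : ¬ Edge a b) (h3 : ¬ Edge b a) : nnf a b = 0 := by
  rw [nnf, if_neg h1, if_neg h2, if_neg h3]

lemma detNN_rec (k : ℕ) :
    (NN (k+6)).det = (X+1) * (NN (k+5)).det - X * (NN (k+4)).det := by
  rw [Matrix.det_succ_row (NN (k+6)) (Fin.last (k+5)), Fin.sum_univ_castSucc,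
    Fin.sum_univ_castSucc]
  have h0 : (∑ j : Fin (k+4), (-1 : ℤ[X]) ^ ((Fin.last (k+5) : ℕ) + ((j.castSucc.castSucc : Fin (k+6)) : ℕ)) *
      NN (k+6) (Fin.last (k+5)) j.castSucc.castSucc *
      ((NN (k+6)).submatrix (Fin.last (k+5)).succAbove (j.castSucc.castSucc).succAbove).det) = 0 := by
    refine Finset.sum_eq_zero fun j _ => ?_
    have hj := j.isLt
    have hentry : NN (k+6) (Fin.last (k+5)) j.castSucc.castSucc = 0 := by
      rw [NN_apply]
      simp only [Fin.val_last, Fin.coe_castSucc]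
      exact nnf_zero (by omega) (by unfold Edge; omega) (by unfold Edge; omega)
    rw [hentry, mul_zero, zero_mul]
  rw [h0, zero_add]
  have hsub_last : (NN (k+6)).submatrix (Fin.last (k+5)).succAbove (Fin.last (k+5)).succAbove
      = NN (k+5) := by
    refine Matrix.ext fun a b => ?_
    have ha := a.isLt
    have hb := b.isLt
    rw [Matrix.submatrix_apply, NN_apply, NN_apply]
    simp only [succAbove_val, Fin.val_last]
    rw [if_pos (by omega), if_pos (by omega)]
  have hdiag : NN (k+6) (Fin.last (k+5)) (Fin.last (k+5)) = X + 1 := by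
    rw [NN_apply]; exact nnf_diag rfl
  have hsign_last : ((-1 : ℤ[X])) ^ ((Fin.last (k+5) : ℕ) + ((Fin.last (k+5)) : ℕ)) = 1 := by
    simp only [Fin.val_last]
    have h2 : (k+5) + (k+5) = 2 * (k+5) := by ring
    rw [h2, pow_mul, neg_one_sq, one_pow]
  have hoff : NN (k+6) (Fin.last (k+5)) ((Fin.last (k+4)).castSucc) = -1 := by
    rw [NN_apply]
    simp only [Fin.val_last, Fin.coe_castSucc]
    exact nnf_down (by unfold Edge; omega)
  have hsign_off : ((-1 : ℤ[X])) ^ ((Fin.last (k+5) : ℕ) + (((Fin.last (k+4)).castSucc : Fin (k+6)) : ℕ)) = -1 := by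
    simp only [Fin.val_last, Fin.coe_castSucc]
    have h2 : (k+5) + (k+4) = 2 * (k+4) + 1 := by ring
    rw [h2, pow_succ, pow_mul, neg_one_sq, one_pow, one_mul]
  have hS1 : ((NN (k+6)).submatrix (Fin.last (k+5)).succAbove
      ((Fin.last (k+4)).castSucc).succAbove).det = -X * (NN (k+4)).det := by
    set S1 := (NN (k+6)).submatrix (Fin.last (k+5)).succAbove
      ((Fin.last (k+4)).castSucc).succAbove with hS1def
    rw [Matrix.det_succ_column S1 (Fin.last (k+4)), Fin.sum_univ_castSucc]
    have hz : (∑ a : Fin (k+4), (-1 : ℤ[X]) ^ (((a.castSucc : Fin (k+5)) : ℕ) + ((Fin.last (k+4)) : ℕ)) *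
        S1 a.castSucc (Fin.last (k+4)) *
        ((S1.submatrix (a.castSucc).succAbove (Fin.last (k+4)).succAbove).det)) = 0 := by
      refine Finset.sum_eq_zero fun a _ => ?_
      have ha := a.isLt
      have hentry : S1 a.castSucc (Fin.last (k+4)) = 0 := by
        rw [hS1def, Matrix.submatrix_apply, NN_apply]
        simp only [succAbove_val, Fin.val_last, Fin.coe_castSucc]
        rw [if_pos (by omega), if_neg (by omega)]
        exact nnf_zero (by omega) (by unfold Edge; omega) (by unfold Edge; omega)
      rw [hentry, mul_zero, zero_mul]
    rw [hz, zero_add]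
    have hentry : S1 (Fin.last (k+4)) (Fin.last (k+4)) = -X := by
      rw [hS1def, Matrix.submatrix_apply, NN_apply]
      simp only [succAbove_val, Fin.val_last, Fin.coe_castSucc]
      rw [if_pos (by omega), if_neg (by omega)]
      exact nnf_up (by unfold Edge; omega)
    have hsign : ((-1 : ℤ[X])) ^ (((Fin.last (k+4)) : ℕ) + ((Fin.last (k+4)) : ℕ)) = 1 := by
      simp only [Fin.val_last]
      have h2 : (k+4) + (k+4) = 2 * (k+4) := by ring
      rw [h2, pow_mul, neg_one_sq, one_pow]
    have hsub : S1.submatrix (Fin.last (k+4)).succAbove (Fin.last (k+4)).succAbove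
        = NN (k+4) := by
      refine Matrix.ext fun a b => ?_
      have ha := a.isLt
      have hb := b.isLt
      rw [Matrix.submatrix_apply, hS1def, Matrix.submatrix_apply, NN_apply, NN_apply]
      have h1 : ((Fin.last (k+4)).succAbove a : ℕ) = (a:ℕ) := by
        rw [succAbove_val, Fin.val_last, if_pos (by omega)]
      have h2 : ((Fin.last (k+4)).succAbove b : ℕ) = (b:ℕ) := by
        rw [succAbove_val, Fin.val_last, if_pos (by omega)]
      have h3 : (((Fin.last (k+4)).castSucc).succAbove ((Fin.last (k+4)).succAbove b) : ℕ)
          = (b:ℕ) := by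
        rw [succAbove_val, h2, Fin.coe_castSucc, Fin.val_last, if_pos (by omega)]
      have h4 : ((Fin.last (k+5)).succAbove ((Fin.last (k+4)).succAbove a) : ℕ) = (a:ℕ) := by
        rw [succAbove_val, h1, Fin.val_last, if_pos (by omega)]
      rw [h4, h3]
    rw [hentry, hsign, hsub]
    ring
  rw [hS1, hoff, hsign_off, hsub_last, hdiag, hsign_last]
  ring

set_option maxRecDepth 100000 in
lemma detNN5 : (NN 5).det = X^5 + X^4 + X + 1 := by
  have h : NN 5 = !![X+1,-X,-X,0,-X; -1,X+1,0,0,0; -1,0,X+1,-X,0; 0,0,-1,X+1,0; -1,0,0,0,X+1] := by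
    refine Matrix.ext fun i j => ?_
    rw [NN_apply]
    fin_cases i <;> fin_cases j <;> norm_num [nnf, Edge]
  rw [h]
  simp [Matrix.det_succ_row_zero, Fin.sum_univ_succ]
  simp [Fin.succAbove, Fin.lt_def]
  ring

set_option maxRecDepth 100000 in
set_option maxHeartbeats 2000000 in
lemma detNN6 : (NN 6).det = X^6 + X^5 - X^3 + X + 1 := by
  have h : NN 6 = !![X+1,-X,-X,0,-X,0; -1,X+1,0,0,0,0; -1,0,X+1,-X,0,0; 0,0,-1,X+1,0,0; -1,0,0,0,X+1,-X; 0,0,0,0,-1,X+1] := by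
    refine Matrix.ext fun i j => ?_
    rw [NN_apply]
    fin_cases i <;> fin_cases j <;> norm_num [nnf, Edge]
  rw [h]
  simp [Matrix.det_succ_row_zero, Fin.sum_univ_succ]
  simp [Fin.succAbove, Fin.lt_def]
  ring

lemma detNN_formula : ∀ j : ℕ,
    (NN (j+6)).det = X^(j+6) + X^(j+5) - (∑ i ∈ Finset.Icc 3 (j+3), X^i) + X + 1 ∧
    (NN (j+7)).det = X^(j+7) + X^(j+6) - (∑ i ∈ Finset.Icc 3 (j+4), X^i) + X + 1 := by
  intro j
  induction j with
  | zero =>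
    constructor
    · rw [detNN6]
      have : Finset.Icc 3 3 = {3} := rfl
      rw [this, Finset.sum_singleton]
    · have := detNN_rec 1
      norm_num at this
      rw [this, detNN6, detNN5]
      have h4 : (3:ℕ) ≤ 3 + 1 := by omega
      rw [Finset.sum_Icc_succ_top h4]
      have : Finset.Icc 3 3 = {3} := rfl
      rw [this, Finset.sum_singleton]
      ring
  | succ j ih =>
    obtain ⟨ih1, ih2⟩ := ih
    constructor
    · exact ih2
    · have hrec := detNN_rec (j+2)
      have e1 : j + 2 + 6 = j + 1 + 7 := by ring
      have e2 : j + 2 + 5 = j + 1 + 6 := by ring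
      have e3 : j + 2 + 4 = j + 6 := by ring
      rw [e1, e2, e3] at hrec
      rw [hrec, ih2, ih1]
      have h5 : (3:ℕ) ≤ j + 4 := by omega
      rw [show j + 1 + 4 = (j+4) + 1 from by ring, Finset.sum_Icc_succ_top (by omega : (3:ℕ) ≤ j + 4 + 1)]
      rw [show j + 4 = (j+3) + 1 from by ring, Finset.sum_Icc_succ_top (by omega : (3:ℕ) ≤ j + 3 + 1)]
      generalize (∑ i ∈ Finset.Icc 3 (j+3), (X:ℤ[X])^i) = s
      simp only [pow_add]
      ring

/-- For `m ≥ 3`, let `K` be the Cartan matrix of the tree `T_{2,3,m}`: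
the central vertex `0` has three attached paths with `1`, `2`, and `m−1` vertices
(vertex `1`; vertices `2–3`; vertices `4–5–⋯–(m+2)`). Then the characteristic polynomial
of the Coxeter transformation `C(K)` equals
`X^{m+3} + X^{m+2} − (X³ + X⁴ + ⋯ + X^m) + X + 1`. -/
theorem stmt_14 (m : ℕ) (hm : 3 ≤ m)
    (K : Matrix (Fin (m + 3)) (Fin (m + 3)) ℤ)
    (hK : ∀ i j : Fin (m + 3), K i j =
      if i = j then 2
      else if (((i : ℕ) = 0 ∧ (j : ℕ) = 1) ∨ ((i : ℕ) = 0 ∧ (j : ℕ) = 2) ∨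
               ((i : ℕ) = 2 ∧ (j : ℕ) = 3) ∨ ((i : ℕ) = 0 ∧ (j : ℕ) = 4) ∨
               (4 ≤ (i : ℕ) ∧ (j : ℕ) = (i : ℕ) + 1 ∧ (j : ℕ) ≤ m + 2)) ∨
              (((j : ℕ) = 0 ∧ (i : ℕ) = 1) ∨ ((j : ℕ) = 0 ∧ (i : ℕ) = 2) ∨
               ((j : ℕ) = 2 ∧ (i : ℕ) = 3) ∨ ((j : ℕ) = 0 ∧ (i : ℕ) = 4) ∨
               (4 ≤ (j : ℕ) ∧ (i : ℕ) = (j : ℕ) + 1 ∧ (i : ℕ) ≤ m + 2))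
      then -1 else 0)
    (R : Fin (m + 3) → Matrix (Fin (m + 3)) (Fin (m + 3)) ℤ)
    (hR : ∀ i a b : Fin (m + 3), R i a b =
      if a = i then (if i = b then 1 else 0) - K i b else (if a = b then 1 else 0))
    (C : Matrix (Fin (m + 3)) (Fin (m + 3)) ℤ)
    (hC : C = (List.ofFn fun i => R i).prod) :
    C.charpoly = X ^ (m + 3) + X ^ (m + 2) - (∑ i ∈ Finset.Icc 3 m, X ^ i) + X + 1 := by
  have hKm : K = Km (m+3) := by
    ext i j
    rw [hK i j]
    have hi := i.isLt
    have hj := j.isLt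
    by_cases hij : i = j
    · rw [if_pos hij]
      simp [Km, hij]
    · rw [if_neg hij]
      show _ = Km (m+3) i j
      rw [Km]
      simp only [Matrix.of_apply]
      rw [if_neg hij]
      refine if_congr ?_ rfl rfl
      have h5 : (4 ≤ (i:ℕ) ∧ (j:ℕ) = (i:ℕ)+1 ∧ (j:ℕ) ≤ m+2) ↔ (4 ≤ (i:ℕ) ∧ (j:ℕ) = (i:ℕ)+1) := by
        omega
      have h5' : (4 ≤ (j:ℕ) ∧ (i:ℕ) = (j:ℕ)+1 ∧ (i:ℕ) ≤ m+2) ↔ (4 ≤ (j:ℕ) ∧ (i:ℕ) = (j:ℕ)+1) := by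
        omega
      unfold Edge
      exact or_congr
        (or_congr Iff.rfl (or_congr Iff.rfl (or_congr Iff.rfl (or_congr Iff.rfl h5))))
        (or_congr Iff.rfl (or_congr Iff.rfl (or_congr Iff.rfl (or_congr Iff.rfl h5'))))
  have hR' : ∀ i : Fin (m+3), R i = 1 - Matrix.single i i 1 * Km (m+3) := by
    intro i
    ext a b
    rw [hR i a b, ← hKm]
    by_cases ha : a = i
    · rw [if_pos ha, ha, Matrix.sub_apply, Matrix.one_apply,
        Matrix.single_mul_apply_same, one_mul]
    · rw [if_neg ha, Matrix.sub_apply, Matrix.one_apply,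
        Matrix.single_mul_apply_of_ne _ _ _ _ _ ha, sub_zero]
  have hBC : Bm (m+3) * C = -(Bm (m+3))ᵀ := by
    rw [hC]
    exact key_lemma R hR'
  have hcp := charpoly_eq_detNN C hBC
  obtain ⟨j, rfl⟩ : ∃ j, m = j + 3 := ⟨m - 3, by omega⟩
  exact hcp.trans (detNN_formula j).1
end

section
/- For n ≥ 10 let p_n(X) := Xⁿ + X^{n−1} − (X³ + X⁴ + ⋯ + X^{n−3}) + X + 1, the characteristic polynomial of the Coxeter transformation of the diagram T_{2,3,n−3}. Let ρ_n denote the spectral radius of p_n, i.e., the maximum of |z| over the complex roots z of p_n. Then, as n → ∞, ρ_n converges to the unique real root ρ_max of the equation λ³ − λ − 1 = 0, and ρ_max = ∛(1/2 + √(23/108)) + ∛(1/2 − √(23/108)) (the smallest Pisot number, ≈ 1.324717). -/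
open Polynomial Filter

private lemma key_fact15 {K : Type*} [Field K] (x : K) (n : ℕ) (hn : 10 ≤ n) :
    (x - 1) * (x ^ n + x ^ (n-1) - (∑ i ∈ Finset.Icc 3 (n-3), x ^ i) + x + 1)
      = x ^ (n-2) * (x^3 - x - 1) + (x^3 + x^2 - 1) := by
  obtain ⟨k, rfl⟩ : ∃ k, n = k + 10 := ⟨n - 10, by omega⟩
  have e1 : k + 10 - 1 = k + 9 := by omega
  have e2 : k + 10 - 2 = k + 8 := by omega
  have e3 : k + 10 - 3 = k + 7 := by omega
  rw [e1, e2, e3]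
  have hIcc : Finset.Icc 3 (k+7) = Finset.Ico 3 (k+8) := by
    rw [← Finset.Ico_add_one_right_eq_Icc]; rfl
  rw [hIcc, Finset.sum_Ico_eq_sub _ (by omega)]
  have hS : (∑ i ∈ Finset.range (k+8), x ^ i) * (x - 1) = x ^ (k+8) - 1 := geom_sum_mul x (k+8)
  have hT : (∑ i ∈ Finset.range 3, x ^ i) * (x - 1) = x ^ 3 - 1 := geom_sum_mul x 3
  linear_combination hT - hS

private lemma cubic_gt15 (x : ℝ) (h : x^3 - x - 1 = 0) : 1.3 < x := by
  by_contra hx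
  push_neg at hx
  nlinarith [sq_nonneg (x - 1.3), sq_nonneg (x + 1), sq_nonneg x, sq_nonneg (x + 0.6)]

private lemma cubic_mono15 {u v : ℝ} (hu : 1 ≤ u) (huv : u ≤ v) :
    u^3 - u - 1 ≤ v^3 - v - 1 := by
  have h1 : 0 ≤ v^2 + u*v + u^2 - 1 := by nlinarith
  nlinarith [mul_nonneg (sub_nonneg.mpr huv) h1]

private lemma conv_aux15 (p : ℕ → Polynomial ℂ)
    (hp : ∀ n : ℕ, 10 ≤ n →
      p n = X ^ n + X ^ (n - 1) - (∑ i ∈ Finset.Icc 3 (n - 3), X ^ i) + X + 1)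
    (rho : ℕ → ℝ)
    (hrho : ∀ n : ℕ, 10 ≤ n →
      (∃ z : ℂ, (p n).IsRoot z ∧ ‖z‖ = rho n) ∧
      (∀ z : ℂ, (p n).IsRoot z → ‖z‖ ≤ rho n))
    (ρ : ℝ) (hρeq : ρ^3 - ρ - 1 = 0) :
    Tendsto rho atTop (nhds ρ) := by
  have hρ13 : 1.3 < ρ := cubic_gt15 ρ hρeq
  · rw [Metric.tendsto_atTop]
    intro ε hε
    set δ := min (ε/2) (1/100) with hδdef
    have hδpos : 0 < δ := lt_min (by linarith) (by norm_num)
    have hδle : δ ≤ 1/100 := min_le_right _ _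
    have hδε : δ < ε := lt_of_le_of_lt (min_le_left _ _) (by linarith)
    clear_value δ
    set A := ρ - δ with hAdef
    set B := ρ + δ with hBdef
    have hA1 : (1.2:ℝ) < A := by simp only [hAdef]; linarith
    have hAρ : A < ρ := by simp only [hAdef]; linarith
    have hρB : ρ < B := by simp only [hBdef]; linarith
    clear_value A B
    have hAneg : A^3 - A - 1 < 0 := by
      have h1 : 0 < ρ^2 + ρ*A + A^2 - 1 := by nlinarith
      nlinarith [mul_pos (sub_pos.mpr hAρ) h1]
    have hBpos : 0 < B^3 - B - 1 := by
      have h1 : 0 < B^2 + B*ρ + ρ^2 - 1 := by nlinarith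
      nlinarith [mul_pos (sub_pos.mpr hρB) h1]
    set cA := 1 + A - A^3 with hcAdef
    have hcA : 0 < cA := by simp only [hcAdef]; linarith
    clear_value cA
    set cB := B^3 - B - 1 with hcBdef
    clear_value cB
    -- N₁ for lower bound
    obtain ⟨M₁, hM₁⟩ := (eventually_atTop.mp
      ((tendsto_pow_atTop_atTop_of_one_lt (show (1:ℝ) < A by linarith)).eventually_ge_atTop
        ((A^3 + A^2) / cA)))
    -- N₂ for upper bound
    obtain ⟨M₂, hM₂⟩ := (eventually_atTop.mp
      ((tendsto_pow_atTop_atTop_of_one_lt (show (1:ℝ) < B by linarith)).eventually_ge_atTop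
        (3 / cB + 1)))
    refine ⟨max (max (M₁ + 2) (M₂ + 5)) 10, fun n hn => ?_⟩
    have hn10 : 10 ≤ n := le_trans (le_max_right _ _) hn
    have hnM1 : M₁ ≤ n - 2 := by
      have := le_trans (le_trans (le_max_left _ _) (le_max_left _ _)) hn; omega
    have hnM2 : M₂ ≤ n - 5 := by
      have := le_trans (le_trans (le_max_right _ _) (le_max_left _ _)) hn; omega
    obtain ⟨⟨z₀, hz₀root, hz₀abs⟩, hub⟩ := hrho n hn10
    -- lower bound: real root in [A, B]
    have hroot_real : ∃ x : ℝ, A ≤ x ∧ x ≤ B ∧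
        x ^ n + x ^ (n-1) - (∑ i ∈ Finset.Icc 3 (n-3), x ^ i) + x + 1 = 0 := by
      have hcont : ContinuousOn
          (fun x : ℝ => x ^ n + x ^ (n-1) - (∑ i ∈ Finset.Icc 3 (n-3), x ^ i) + x + 1)
          (Set.Icc A B) := by
        apply Continuous.continuousOn
        fun_prop
      have hfA : A ^ n + A ^ (n-1) - (∑ i ∈ Finset.Icc 3 (n-3), A ^ i) + A + 1 ≤ 0 := by
        have hk := key_fact15 A n hn10
        have hApow : (A^3 + A^2) / cA ≤ A ^ (n-2) := hM₁ (n-2) hnM1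
        have h1 : A^3 + A^2 ≤ A ^ (n-2) * cA := by
          rw [← div_le_iff₀ hcA]; exact hApow
        by_contra hcon
        push_neg at hcon
        have hA1' : (0:ℝ) < A - 1 := by linarith
        have hprod := mul_pos hA1' hcon
        have h2 : A ^ (n-2) * (A^3 - A - 1) = -(A ^ (n-2) * cA) := by
          rw [hcAdef]; ring
        linarith [hk, hprod, h2, h1]
      have hfB : 0 ≤ B ^ n + B ^ (n-1) - (∑ i ∈ Finset.Icc 3 (n-3), B ^ i) + B + 1 := by
        have hk := key_fact15 B n hn10
        have hBpow : 0 < B ^ (n-2) := pow_pos (by linarith) _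
        by_contra hcon
        push_neg at hcon
        have hB1' : (0:ℝ) < B - 1 := by linarith
        have hprod := mul_neg_of_pos_of_neg hB1' hcon
        have h2 : B ^ (n-2) * (B^3 - B - 1) = B ^ (n-2) * cB := by rw [hcBdef]
        have h3 : 0 < B ^ (n-2) * cB := mul_pos hBpow hBpos
        have h4 : 0 < B^3 + B^2 - 1 := by nlinarith [hρB, hρ13]
        linarith [hk, hprod, h2, h3, h4]
      obtain ⟨x, hxmem, hfx⟩ := intermediate_value_Icc (by linarith : A ≤ B) hcont
        ⟨hfA, hfB⟩
      exact ⟨x, hxmem.1, hxmem.2, hfx⟩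
    obtain ⟨x, hxA, hxB, hfx⟩ := hroot_real
    have hxroot : (p n).IsRoot (x : ℂ) := by
      rw [hp n hn10]
      simp only [IsRoot, eval_add, eval_sub, eval_pow, eval_X, eval_one, eval_finset_sum]
      exact_mod_cast hfx
    have hlow : ρ - δ ≤ rho n := by
      have := hub _ hxroot
      rw [Complex.norm_real, Real.norm_eq_abs, abs_of_pos (by linarith : (0:ℝ) < x)] at this
      linarith
    -- upper bound: rho n ≤ B
    have hupp : rho n ≤ B := by
      by_contra hgt
      push_neg at hgt
      set r := ‖z₀‖ with hrdef
      clear_value r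
      have hrB : B < r := by rw [hz₀abs]; exact hgt
      have hr1 : (1:ℝ) < r := by linarith
      have hev : z₀^n + z₀^(n-1) - (∑ i ∈ Finset.Icc 3 (n-3), z₀^i) + z₀ + 1 = 0 := by
        have := hz₀root
        rw [hp n hn10] at this
        simpa only [IsRoot, eval_add, eval_sub, eval_pow, eval_X, eval_one,
          eval_finset_sum] using this
      have h0 : z₀ ^ (n-2) * (z₀^3 - z₀ - 1) + (z₀^3 + z₀^2 - 1) = 0 := by
        rw [← key_fact15 z₀ n hn10, hev, mul_zero]
      have h1 : z₀ ^ (n-2) * (z₀^3 - z₀ - 1) = -(z₀^3 + z₀^2 - 1) :=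
        eq_neg_of_add_eq_zero_left h0
      have habs : r ^ (n-2) * ‖z₀^3 - z₀ - 1‖ = ‖z₀^3 + z₀^2 - 1‖ := by
        rw [hrdef, ← norm_pow, ← norm_mul, h1, norm_neg]
      have habs3 : ‖z₀^3‖ = r^3 := by rw [norm_pow, ← hrdef]
      have habs2 : ‖z₀^2‖ = r^2 := by rw [norm_pow, ← hrdef]
      have hlb : B^3 - B - 1 ≤ ‖z₀^3 - z₀ - 1‖ := by
        have h2 : ‖z₀ + 1‖ ≤ r + 1 := by
          calc ‖z₀ + 1‖ ≤ ‖z₀‖ + ‖(1:ℂ)‖ := norm_add_le _ _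
          _ = r + 1 := by rw [← hrdef, norm_one]
        have h1' : ‖z₀^3‖ - ‖z₀ + 1‖ ≤ ‖z₀^3 - (z₀ + 1)‖ :=
          norm_sub_norm_le _ _
        rw [habs3] at h1'
        rw [show z₀^3 - z₀ - 1 = z₀^3 - (z₀+1) by ring]
        have hmono := cubic_mono15 (show (1:ℝ) ≤ B by linarith) hrB.le
        linarith
      have hub2 : ‖z₀^3 + z₀^2 - 1‖ ≤ 3 * r^3 := by
        have t1 : ‖z₀^3 + z₀^2 - 1‖
            ≤ ‖z₀^3 + z₀^2‖ + ‖(-1 : ℂ)‖ := by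
          rw [show z₀^3 + z₀^2 - 1 = (z₀^3 + z₀^2) + (-1) by ring]
          exact norm_add_le _ _
        have t2 : ‖z₀^3 + z₀^2‖ ≤ r^3 + r^2 := by
          calc ‖z₀^3 + z₀^2‖ ≤ ‖z₀^3‖ + ‖z₀^2‖ :=
                norm_add_le _ _
          _ = r^3 + r^2 := by rw [habs3, habs2]
        have t3 : ‖(-1:ℂ)‖ = 1 := by simp
        have t4 : r^2 ≤ r^3 := pow_le_pow_right₀ hr1.le (by norm_num)
        have t5 : (1:ℝ) ≤ r^3 := by
          simpa using pow_le_pow_right₀ hr1.le (Nat.zero_le 3)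
        linarith
      -- combine
      have hsplit : r ^ (n-2) = r ^ (n-5) * r^3 := by
        rw [← pow_add]; congr 1; omega
      have hkey : cB * r ^ (n-5) ≤ 3 := by
        have hr3 : (0:ℝ) < r^3 := by positivity
        have hmain : r ^ (n-5) * r^3 * cB ≤ 3 * r^3 := by
          calc r ^ (n-5) * r^3 * cB = r ^ (n-2) * (B^3 - B - 1) := by
                rw [hsplit, hcBdef]
          _ ≤ r ^ (n-2) * ‖z₀^3 - z₀ - 1‖ := by
                apply mul_le_mul_of_nonneg_left hlb (by positivity)
          _ = ‖z₀^3 + z₀^2 - 1‖ := habs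
          _ ≤ 3 * r^3 := hub2
        exact le_of_mul_le_mul_right (by linarith only [hmain]) hr3
      have hBpow : 3 / cB + 1 ≤ B ^ (n-5) := hM₂ (n-5) hnM2
      have hrpow : B ^ (n-5) ≤ r ^ (n-5) :=
        pow_le_pow_left₀ (by linarith) (le_of_lt hrB) _
      have : 3 / cB + 1 ≤ r ^ (n-5) := le_trans hBpow hrpow
      have h7 : (3 / cB + 1) * cB ≤ r ^ (n-5) * cB :=
        mul_le_mul_of_nonneg_right this (le_of_lt hBpos)
      rw [div_add_one (ne_of_gt hBpos)] at h7
      rw [div_mul_cancel₀ _ (ne_of_gt hBpos)] at h7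
      linarith only [hkey, h7, hBpos]
    rw [Real.dist_eq]
    have : |rho n - ρ| ≤ δ := by
      rw [abs_le]
      rw [hBdef] at hupp
      exact ⟨by linarith only [hlow], by linarith only [hupp]⟩
    linarith only [this, hδε]

/-- For `n ≥ 10` let `p_n(X) = Xⁿ + X^{n−1} − (X³ + ⋯ + X^{n−3}) + X + 1`
(the characteristic polynomial of the Coxeter transformation of `T_{2,3,n−3}`) and let
`ρ_n` be the maximum of `|z|` over the complex roots of `p_n`. Then `ρ_n` converges, as
`n → ∞`, to the unique real root `ρ_max` of `λ³ − λ − 1 = 0`, and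
`ρ_max = ∛(1/2 + √(23/108)) + ∛(1/2 − √(23/108))` (the smallest Pisot number). -/
theorem stmt_15 (p : ℕ → Polynomial ℂ)
    (hp : ∀ n : ℕ, 10 ≤ n →
      p n = X ^ n + X ^ (n - 1) - (∑ i ∈ Finset.Icc 3 (n - 3), X ^ i) + X + 1)
    (rho : ℕ → ℝ)
    (hrho : ∀ n : ℕ, 10 ≤ n →
      (∃ z : ℂ, (p n).IsRoot z ∧ ‖z‖ = rho n) ∧
      (∀ z : ℂ, (p n).IsRoot z → ‖z‖ ≤ rho n)) :
    ∃ ρmax : ℝ,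
      ρmax ^ 3 - ρmax - 1 = 0 ∧
      (∀ r : ℝ, r ^ 3 - r - 1 = 0 → r = ρmax) ∧
      ρmax = (1 / 2 + Real.sqrt (23 / 108)) ^ ((1 : ℝ) / 3)
           + (1 / 2 - Real.sqrt (23 / 108)) ^ ((1 : ℝ) / 3) ∧
      Tendsto rho atTop (nhds ρmax) := by
  -- construct the root
  set s := Real.sqrt (23/108) with hsdef
  have hs : s^2 = 23/108 := Real.sq_sqrt (by norm_num)
  have hs0 : 0 ≤ s := Real.sqrt_nonneg _
  have hslt : s < 1/2 := by nlinarith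
  have hA' : (0:ℝ) ≤ 1/2 + s := by linarith
  have hB' : (0:ℝ) ≤ 1/2 - s := by linarith
  set a := (1/2 + s) ^ ((1:ℝ)/3) with hadef
  set b := (1/2 - s) ^ ((1:ℝ)/3) with hbdef
  have ha3 : a^3 = 1/2 + s := by
    rw [hadef, ← Real.rpow_natCast ((1/2+s) ^ ((1:ℝ)/3)) 3, ← Real.rpow_mul hA']
    norm_num
  have hb3 : b^3 = 1/2 - s := by
    rw [hbdef, ← Real.rpow_natCast ((1/2-s) ^ ((1:ℝ)/3)) 3, ← Real.rpow_mul hB']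
    norm_num
  have hab : a * b = 1/3 := by
    rw [hadef, hbdef, ← Real.mul_rpow hA' hB']
    have : (1/2+s)*(1/2-s) = (1/27 : ℝ) := by nlinarith
    rw [this, show (1/27 : ℝ) = (1/3 : ℝ)^(3:ℕ) by norm_num,
      ← Real.rpow_natCast (1/3 : ℝ) 3, ← Real.rpow_mul (by norm_num)]
    norm_num
  set ρ := a + b with hρdef
  have hρeq : ρ^3 - ρ - 1 = 0 := by linear_combination ha3 + hb3 + (3*(a+b))*hab
  have hρ13 : 1.3 < ρ := cubic_gt15 ρ hρeq
  refine ⟨ρ, hρeq, ?_, ?_, ?_⟩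
  · intro r hr
    have hr13 : 1.3 < r := cubic_gt15 r hr
    have hfac : (r - ρ) * (r^2 + r*ρ + ρ^2 - 1) = 0 := by linear_combination hr - hρeq
    have hpos : r^2 + r*ρ + ρ^2 - 1 > 0 := by nlinarith
    have := mul_eq_zero.mp hfac
    rcases this with h | h
    · linarith [sub_eq_zero.mp h]
    · linarith
  · rfl
  · exact conv_aux15 p hp rho hrho ρ hρeq
end

section
/- For n ≥ 4 let q_n(X) := X^{n+4} + X^{n+3} − 2X^{n+1} − 3(X⁴ + X⁵ + ⋯ + Xⁿ) − 2X³ + X + 1, the characteristic polynomial of the Coxeter transformation of the diagram T_{3,3,n}. Let ρ_n denote the spectral radius of q_n, i.e., the maximum of |z| over the complex roots z of q_n. Then, as n → ∞, ρ_n converges to the maximal root ρ_max of the equation λ² − λ − 1 = 0, namely ρ_max = (1 + √5)/2, the golden mean. -/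
open Polynomial Filter

private lemma gsum16 (z : ℂ) : ∀ n : ℕ, 4 ≤ n →
    (z - 1) * (∑ i ∈ Finset.Icc 4 n, z ^ i) = z ^ (n + 1) - z ^ 4 := by
  intro n hn
  induction n, hn using Nat.le_induction with
  | base => norm_num [Finset.Icc_self]; ring
  | succ n hn ih =>
    rw [Finset.sum_Icc_succ_top (by omega)]
    ring_nf
    ring_nf at ih
    linear_combination ih

private lemma key16 (n : ℕ) (hn : 4 ≤ n) (z : ℂ) :
    (z - 1) * (z ^ (n + 4) + z ^ (n + 3) - 2 * z ^ (n + 1)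
      - 3 * (∑ i ∈ Finset.Icc 4 n, z ^ i) - 2 * z ^ 3 + z + 1)
    = (z ^ 2 + z + 1) * (z ^ (n + 1) * (z ^ 2 - z - 1) + (z ^ 2 + z - 1)) := by
  linear_combination (-3 : ℂ) * gsum16 z n hn

private lemma eval16 (q : ℕ → Polynomial ℂ)
    (hq : ∀ n : ℕ, 4 ≤ n →
      q n = X ^ (n + 4) + X ^ (n + 3) - 2 * X ^ (n + 1)
            - 3 * (∑ i ∈ Finset.Icc 4 n, X ^ i) - 2 * X ^ 3 + X + 1)
    (n : ℕ) (hn : 4 ≤ n) (z : ℂ) :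
    (q n).eval z = z ^ (n + 4) + z ^ (n + 3) - 2 * z ^ (n + 1)
      - 3 * (∑ i ∈ Finset.Icc 4 n, z ^ i) - 2 * z ^ 3 + z + 1 := by
  rw [hq n hn]
  simp [eval_finset_sum]

/-- If z is a root of q n (n ≥ 4), then either z² + z + 1 = 0 or
z^(n+1)(z²-z-1) + (z²+z-1) = 0, or z = 1.  Conversely if z ≠ 1 and the second
factor vanishes then z is a root. -/
private lemma root_iff16 (q : ℕ → Polynomial ℂ)
    (hq : ∀ n : ℕ, 4 ≤ n →
      q n = X ^ (n + 4) + X ^ (n + 3) - 2 * X ^ (n + 1)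
            - 3 * (∑ i ∈ Finset.Icc 4 n, X ^ i) - 2 * X ^ 3 + X + 1)
    (n : ℕ) (hn : 4 ≤ n) (z : ℂ) :
    (z - 1) * (q n).eval z
      = (z ^ 2 + z + 1) * (z ^ (n + 1) * (z ^ 2 - z - 1) + (z ^ 2 + z - 1)) := by
  rw [eval16 q hq n hn z]; exact key16 n hn z

set_option maxHeartbeats 800000 in
/-- For `n ≥ 4` let
`q_n(X) = X^{n+4} + X^{n+3} − 2X^{n+1} − 3(X⁴ + ⋯ + Xⁿ) − 2X³ + X + 1`
(the characteristic polynomial of the Coxeter transformation of `T_{3,3,n}`) and let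
`ρ_n` be the maximum of `|z|` over the complex roots of `q_n`. Then `ρ_n` converges, as
`n → ∞`, to the maximal root `ρ_max = (1 + √5)/2` (the golden mean) of `λ² − λ − 1 = 0`. -/
theorem stmt_16 (q : ℕ → Polynomial ℂ)
    (hq : ∀ n : ℕ, 4 ≤ n →
      q n = X ^ (n + 4) + X ^ (n + 3) - 2 * X ^ (n + 1)
            - 3 * (∑ i ∈ Finset.Icc 4 n, X ^ i) - 2 * X ^ 3 + X + 1)
    (rho : ℕ → ℝ)
    (hrho : ∀ n : ℕ, 4 ≤ n →
      (∃ z : ℂ, (q n).IsRoot z ∧ ‖z‖ = rho n) ∧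
      (∀ z : ℂ, (q n).IsRoot z → ‖z‖ ≤ rho n)) :
    ∃ ρmax : ℝ,
      ρmax ^ 2 - ρmax - 1 = 0 ∧
      (∀ r : ℝ, r ^ 2 - r - 1 = 0 → r ≤ ρmax) ∧
      ρmax = (1 + Real.sqrt 5) / 2 ∧
      Tendsto rho atTop (nhds ρmax) := by
  set φ : ℝ := (1 + Real.sqrt 5) / 2 with hφdef
  have h5 : (2:ℝ) < Real.sqrt 5 := by
    nlinarith [Real.sq_sqrt (show (0:ℝ) ≤ 5 by norm_num),
      Real.sqrt_nonneg 5]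
  have h5' : Real.sqrt 5 < 3 := by
    nlinarith [Real.sq_sqrt (show (0:ℝ) ≤ 5 by norm_num), Real.sqrt_nonneg 5]
  have hφ2 : φ ^ 2 = φ + 1 := by
    have h := Real.sq_sqrt (show (0:ℝ) ≤ 5 by norm_num)
    rw [hφdef]; nlinarith [h]
  have hφgt : (3:ℝ)/2 < φ := by rw [hφdef]; linarith
  have hφlt : φ < 2 := by rw [hφdef]; linarith
  refine ⟨φ, by linarith, ?_, rfl, ?_⟩
  · -- maximality among roots of r² - r - 1 = 0
    intro r hr
    by_contra h
    push_neg at h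
    nlinarith [mul_pos (sub_pos.2 h) (show (0:ℝ) < r + φ - 1 by linarith)]
  · -- convergence
    rw [Metric.tendsto_atTop]
    intro ε hε
    -- lower-bound parameters
    set x₀ : ℝ := max (φ - ε/2) (3/2) with hx₀def
    have hx₀ge : (3:ℝ)/2 ≤ x₀ := le_max_right _ _
    have hx₀lt : x₀ < φ := max_lt (by linarith) hφgt
    have hx₀pos : (0:ℝ) < x₀ := by linarith
    have hc : 0 < x₀ + 1 - x₀ ^ 2 := by
      nlinarith [mul_pos (sub_pos.2 hx₀lt) (show (0:ℝ) < x₀ + φ - 1 by linarith)]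
    obtain ⟨N₁, hN₁⟩ := pow_unbounded_of_one_lt (5 / (x₀ + 1 - x₀ ^ 2))
      (show (1:ℝ) < 3/2 by norm_num)
    obtain ⟨N₂, hN₂⟩ := pow_unbounded_of_one_lt (3 / ε) (show (1:ℝ) < 3/2 by norm_num)
    refine ⟨max (max 4 (N₁ + 1)) (N₂ + 2), fun n hn => ?_⟩
    have hn4 : 4 ≤ n := le_trans (le_trans (le_max_left _ _) (le_max_left _ _)) hn
    have hnN₁ : N₁ ≤ n := by
      have := le_trans (le_trans (le_max_right _ _) (le_max_left _ _)) hn; omega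
    have hnN₂ : N₂ + 2 ≤ n := le_trans (le_max_right _ _) hn
    obtain ⟨⟨w, hw, hwabs⟩, hmax⟩ := hrho n hn4
    -- LOWER BOUND : rho n ≥ x₀
    have hlow : x₀ ≤ rho n := by
      have hcont : Continuous fun t : ℝ => t ^ (n+1) * (t^2 - t - 1) + (t^2 + t - 1) :=
        ((continuous_pow (n+1)).mul (((continuous_pow 2).sub continuous_id).sub
          continuous_const)).add (((continuous_pow 2).add continuous_id).sub continuous_const)
      have hpow : 5 / (x₀ + 1 - x₀ ^ 2) < x₀ ^ (n + 1) := by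
        calc 5 / (x₀ + 1 - x₀ ^ 2) < (3/2) ^ N₁ := hN₁
          _ ≤ x₀ ^ N₁ := pow_le_pow_left₀ (by norm_num) hx₀ge _
          _ ≤ x₀ ^ (n + 1) := pow_le_pow_right₀ (by linarith) (by omega)
      have hfx₀ : x₀ ^ (n+1) * (x₀^2 - x₀ - 1) + (x₀^2 + x₀ - 1) < 0 := by
        have h1 : 5 < x₀ ^ (n + 1) * (x₀ + 1 - x₀ ^ 2) := by
          rw [div_lt_iff₀ hc] at hpow; linarith
        nlinarith
      have hfφ : 0 < φ ^ (n+1) * (φ^2 - φ - 1) + (φ^2 + φ - 1) := by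
        have : φ ^ 2 - φ - 1 = 0 := by linarith
        rw [this, mul_zero]; linarith
      obtain ⟨t, htmem, hft⟩ := intermediate_value_Icc hx₀lt.le hcont.continuousOn
        ⟨hfx₀.le, hfφ.le⟩
      simp only [Set.mem_Icc] at htmem
      have hft' : (t:ℂ) ^ (n+1) * ((t:ℂ)^2 - t - 1) + ((t:ℂ)^2 + t - 1) = 0 := by
        exact_mod_cast congrArg (fun x : ℝ => (x:ℂ)) hft
      have ht1 : (t:ℂ) - 1 ≠ 0 := by
        intro h
        rw [sub_eq_zero] at h
        have : t = 1 := by exact_mod_cast h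
        linarith [htmem.1]
      have hroot : (q n).IsRoot (t:ℂ) := by
        have hk := root_iff16 q hq n hn4 (t:ℂ)
        rw [hft', mul_zero] at hk
        have := mul_eq_zero.mp hk
        rcases this with h | h
        · exact absurd h ht1
        · exact h
      have := hmax _ hroot
      rw [Complex.norm_real, Real.norm_eq_abs, abs_of_nonneg (by linarith [htmem.1] : (0:ℝ) ≤ t)] at this
      linarith [htmem.1]
    -- UPPER BOUND : rho n < φ + ε
    have hrpos : (3:ℝ)/2 ≤ rho n := le_trans hx₀ge hlow
    have hup : rho n < φ + ε := by
      by_contra hcon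
      push_neg at hcon
      set r : ℝ := rho n with hrdef
      have hrw : ‖w‖ = r := hwabs
      have hk := root_iff16 q hq n hn4 w
      rw [hw, mul_zero] at hk
      have hnw : ‖w‖ = r := by rw [hrw]
      rcases mul_eq_zero.mp hk.symm with h | h
      · -- w² + w + 1 = 0 forces |w| ≤ φ
        have hw2 : w ^ 2 = -(w + 1) := by linear_combination h
        have hr2 : r ^ 2 ≤ r + 1 := by
          calc r ^ 2 = ‖w ^ 2‖ := by rw [norm_pow, hnw]
            _ = ‖w + 1‖ := by rw [hw2, norm_neg]
            _ ≤ ‖w‖ + ‖(1:ℂ)‖ := norm_add_le _ _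
            _ = r + 1 := by rw [hnw, norm_one]
        nlinarith
      · -- the Lehmer factor vanishes
        have hB : w ^ (n+1) * (w ^ 2 - w - 1) = -(w ^ 2 + w - 1) := by
          linear_combination h
        have habs : r ^ (n+1) * ‖w ^ 2 - w - 1‖ = ‖w ^ 2 + w - 1‖ := by
          rw [← hnw, ← norm_pow, ← norm_mul, hB, norm_neg]
        have hfacc : (w - (φ:ℂ)) * (w - ((1 - φ : ℝ):ℂ)) = w ^ 2 - w - 1 := by
          have hc2 : ((φ:ℝ):ℂ) ^ 2 = (φ:ℝ) + 1 := by
            exact_mod_cast congrArg (fun x : ℝ => (x:ℂ)) hφ2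
          push_cast
          linear_combination -hc2
        have hd1 : ε ≤ ‖w - ((φ:ℝ):ℂ)‖ := by
          have h1 := norm_sub_norm_le w ((φ:ℝ):ℂ)
          rw [hnw, Complex.norm_real, Real.norm_eq_abs,
            abs_of_nonneg (by linarith : (0:ℝ) ≤ φ)] at h1
          linarith
        have hd2 : 1 ≤ ‖w - ((1 - φ : ℝ):ℂ)‖ := by
          have h1 := norm_sub_norm_le w ((1 - φ : ℝ):ℂ)
          rw [hnw, Complex.norm_real, Real.norm_eq_abs,
            abs_of_nonpos (by linarith : (1 - φ : ℝ) ≤ 0)] at h1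
          linarith
        have hlow2 : ε ≤ ‖w ^ 2 - w - 1‖ := by
          rw [← hfacc, norm_mul]
          calc ε = ε * 1 := (mul_one ε).symm
            _ ≤ ‖w - ((φ:ℝ):ℂ)‖ * ‖w - ((1 - φ : ℝ):ℂ)‖ :=
              mul_le_mul hd1 hd2 (by norm_num) (norm_nonneg _)
        have hub2 : ‖w ^ 2 + w - 1‖ ≤ 3 * r ^ 2 := by
          calc ‖w ^ 2 + w - 1‖
              ≤ ‖w ^ 2 + w‖ + ‖(1:ℂ)‖ := norm_sub_le _ _
            _ ≤ ‖w ^ 2‖ + ‖w‖ + 1 := by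
                have := norm_add_le (w ^ 2) w
                rw [norm_one]; linarith
            _ = r ^ 2 + r + 1 := by rw [norm_pow, hnw]
            _ ≤ 3 * r ^ 2 := by nlinarith
        -- so r^(n+1) * ε ≤ 3 r², giving r^(n-1) * ε ≤ 3
        have hkey2 : r ^ (n+1) * ε ≤ 3 * r ^ 2 := by
          calc r ^ (n+1) * ε ≤ r ^ (n+1) * ‖w ^ 2 - w - 1‖ := by
                apply mul_le_mul_of_nonneg_left hlow2 (by positivity)
            _ = ‖w ^ 2 + w - 1‖ := habs
            _ ≤ 3 * r ^ 2 := hub2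
        have hsplit : n + 1 = (n - 1) + 2 := by omega
        rw [hsplit, pow_add] at hkey2
        have hr2pos : (0:ℝ) < r ^ 2 := by positivity
        have hfin : r ^ (n-1) * ε ≤ 3 := by
          rw [show r ^ (n-1) * r ^ 2 * ε = (r ^ (n-1) * ε) * r ^ 2 by ring] at hkey2
          exact le_of_mul_le_mul_right (by linarith) hr2pos
        have hbig : 3 < r ^ (n-1) * ε := by
          have h32 : (3:ℝ)/ε < (3/2) ^ (n-1) := by
            calc (3:ℝ)/ε < (3/2) ^ N₂ := hN₂
              _ ≤ (3/2) ^ (n-1) := pow_le_pow_right₀ (by norm_num) (by omega)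
          have hle : ((3:ℝ)/2) ^ (n-1) ≤ r ^ (n-1) :=
            pow_le_pow_left₀ (by norm_num) hrpos _
          have h3 : 3 / ε < r ^ (n-1) := lt_of_lt_of_le h32 hle
          rw [div_lt_iff₀ hε] at h3
          linarith
        linarith
    rw [Real.dist_eq, abs_sub_lt_iff]
    constructor
    · linarith
    · have : φ - ε/2 ≤ x₀ := le_max_left _ _
      linarith
end

section
/- For n ≥ 4 let r_n(X) := X^{n+4} + X^{n+3} − X^{n+1} − 2(X⁴ + X⁵ + ⋯ + Xⁿ) − X³ + X + 1, the characteristic polynomial of the Coxeter transformation of the diagram T_{2,4,n}. Let ρ_n denote the spectral radius of r_n, i.e., the maximh of |z| over the complex roots z of r_n. Then, as n → ∞, ρ_n converges to the unique real root ρ_max of the equation λ³ − λ² − 1 = 0, and ρ_max = 1/3 + ∛(58/108 + √(31/108)) + ∛(58/108 − √(31/108)) (≈ 1.465571). -/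
open Polynomial Filter

private lemma cube_mono' {A B : ℝ} (hA : 1 ≤ A) (hAB : A ≤ B) :
    A^3 - A^2 - 1 ≤ B^3 - B^2 - 1 := by
  nlinarith [mul_nonneg (show (0:ℝ) ≤ A by linarith) (show (0:ℝ) ≤ A - 1 by linarith),
    mul_nonneg (show (0:ℝ) ≤ B by linarith) (show (0:ℝ) ≤ B - 1 by linarith),
    mul_nonneg (show (0:ℝ) ≤ A by linarith) (show (0:ℝ) ≤ B by linarith),
    mul_nonneg (sub_nonneg.2 hAB) (show (0:ℝ) ≤ B^2 + A*B + A^2 - A - B by nlinarith)]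

private lemma cube_strict' {A B : ℝ} (hA : 1 ≤ A) (hAB : A < B) :
    A^3 - A^2 - 1 < B^3 - B^2 - 1 := by
  nlinarith [mul_nonneg (show (0:ℝ) ≤ A by linarith) (show (0:ℝ) ≤ A - 1 by linarith),
    mul_nonneg (show (0:ℝ) ≤ B by linarith) (show (0:ℝ) ≤ B - 1 by linarith),
    mul_pos (show (0:ℝ) < A by linarith) (show (0:ℝ) < B by linarith),
    mul_pos (sub_pos.2 hAB) (show (0:ℝ) < B^2 + A*B + A^2 - A - B by nlinarith)]

private lemma root_gt_one' {s : ℝ} (hs : s^3 - s^2 - 1 = 0) : 1 < s := by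
  by_contra h
  push_neg at h
  nlinarith [sq_nonneg s, mul_nonneg (sq_nonneg s) (sub_nonneg.2 h)]

private lemma key_id' (n : ℕ) (hn : 4 ≤ n) (z : ℂ) :
    (z-1) * (z^(n+4)+z^(n+3)-z^(n+1)-2*(∑ i ∈ Finset.Icc 4 n, z^i)-z^3+z+1)
    = (z+1)*(z^(n+1)*(z^3-z^2-1)+(z^3+z-1)) := by
  have hS : (∑ i ∈ Finset.Icc 4 n, z^i) * (z-1) = z^(n+1) - z^4 := by
    rw [← Finset.Ico_add_one_right_eq_Icc, Finset.sum_Ico_eq_sub _ (by omega), sub_mul,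
      geom_sum_mul, geom_sum_mul]
    ring
  linear_combination (-2:ℂ) * hS

private lemma eval_r' (n : ℕ) (z : ℂ) :
    eval z ((X:ℂ[X]) ^ (n + 4) + X ^ (n + 3) - X ^ (n + 1)
      - 2 * (∑ i ∈ Finset.Icc 4 n, X ^ i) - X ^ 3 + X + 1)
    = z^(n+4)+z^(n+3)-z^(n+1)-2*(∑ i ∈ Finset.Icc 4 n, z^i)-z^3+z+1 := by
  simp [eval_finset_sum]

private lemma rho_cubic' :
    (1/3 + (58/108 + Real.sqrt (31/108)) ^ ((1:ℝ)/3)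
      + (58/108 - Real.sqrt (31/108)) ^ ((1:ℝ)/3)) ^ 3
    - (1/3 + (58/108 + Real.sqrt (31/108)) ^ ((1:ℝ)/3)
      + (58/108 - Real.sqrt (31/108)) ^ ((1:ℝ)/3)) ^ 2 - 1 = 0 := by
  set v : ℝ := Real.sqrt (31/108) with hv
  set A : ℝ := 58/108 + v with hA
  set B : ℝ := 58/108 - v with hB
  have hv0 : 0 ≤ v := Real.sqrt_nonneg _
  have hvsq : v^2 = 31/108 := Real.sq_sqrt (by norm_num)
  have hvle : v ≤ 58/108 := by nlinarith [hvsq, hv0]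
  have hA0 : (0:ℝ) ≤ A := by simp [hA]; linarith
  have hB0 : (0:ℝ) ≤ B := by simp [hB]; linarith
  set a : ℝ := A ^ ((1:ℝ)/3) with ha
  set b : ℝ := B ^ ((1:ℝ)/3) with hb
  have ha3 : a^3 = A := by
    rw [ha, ← Real.rpow_natCast (A ^ ((1:ℝ)/3)) 3, ← Real.rpow_mul hA0]; norm_num
  have hb3 : b^3 = B := by
    rw [hb, ← Real.rpow_natCast (B ^ ((1:ℝ)/3)) 3, ← Real.rpow_mul hB0]; norm_num
  have hab : a * b = 1/9 := by
    rw [ha, hb, ← Real.mul_rpow hA0 hB0]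
    have : A * B = 1/729 := by rw [hA, hB]; nlinarith [hvsq]
    rw [this, show (1/729 : ℝ) = (1/9)^(3:ℕ) by norm_num,
      ← Real.rpow_natCast (1/9 : ℝ) 3, ← Real.rpow_mul (by norm_num)]
    norm_num
  have hAB : A + B = 29/27 := by rw [hA, hB]; ring
  linear_combination ha3 + hb3 + 3*(a+b)*hab + hAB

private lemma final_contra' {t c G : ℝ} (hc : 0 < c) (ht : 1 ≤ t)
    (h2 : t^3 * (3+c) ≤ G) (hGz : G ≤ t^3 + t + 1) : False := by
  have h1 : t ≤ t^3 := by
    nlinarith [mul_nonneg (mul_nonneg (show (0:ℝ) ≤ t by linarith)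
      (sub_nonneg.2 ht)) (show (0:ℝ) ≤ t+1 by linarith)]
  have h2' : (1:ℝ) ≤ t^3 := by
    nlinarith [mul_nonneg (sub_nonneg.2 ht) (show (0:ℝ) ≤ t^2+t+1 by positivity)]
  nlinarith [mul_pos hc (show (0:ℝ) < t^3 by positivity)]

/-- For `n ≥ 4` let
`r_n(X) = X^{n+4} + X^{n+3} − X^{n+1} − 2(X⁴ + ⋯ + Xⁿ) − X³ + X + 1`
(the characteristic polynomial of the Coxeter transformation of `T_{2,4,n}`) and let
`ρ_n` be the maximum of `|z|` over the complex roots of `r_n`. Then `ρ_n` converges, as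
`n → ∞`, to the unique real root `ρ_max` of `λ³ − λ² − 1 = 0`, and
`ρ_max = 1/3 + ∛(58/108 + √(31/108)) + ∛(58/108 − √(31/108))` (≈ 1.465571). -/
theorem stmt_17 (r : ℕ → Polynomial ℂ)
    (hr : ∀ n : ℕ, 4 ≤ n →
      r n = X ^ (n + 4) + X ^ (n + 3) - X ^ (n + 1)
            - 2 * (∑ i ∈ Finset.Icc 4 n, X ^ i) - X ^ 3 + X + 1)
    (rho : ℕ → ℝ)
    (hrho : ∀ n : ℕ, 4 ≤ n →
      (∃ z : ℂ, (r n).IsRoot z ∧ ‖z‖ = rho n) ∧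
      (∀ z : ℂ, (r n).IsRoot z → ‖z‖ ≤ rho n)) :
    ∃ ρmax : ℝ,
      ρmax ^ 3 - ρmax ^ 2 - 1 = 0 ∧
      (∀ s : ℝ, s ^ 3 - s ^ 2 - 1 = 0 → s = ρmax) ∧
      ρmax = 1 / 3 + (58 / 108 + Real.sqrt (31 / 108)) ^ ((1 : ℝ) / 3)
           + (58 / 108 - Real.sqrt (31 / 108)) ^ ((1 : ℝ) / 3) ∧
      Tendsto rho atTop (nhds ρmax) := by
  obtain ⟨ρ, hρdef⟩ : ∃ ρ : ℝ, ρ = 1 / 3 + (58 / 108 + Real.sqrt (31 / 108)) ^ ((1 : ℝ) / 3)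
      + (58 / 108 - Real.sqrt (31 / 108)) ^ ((1 : ℝ) / 3) := ⟨_, rfl⟩
  have hρ3 : ρ^3 - ρ^2 - 1 = 0 := by rw [hρdef]; exact rho_cubic'
  have hρ1 : 1 < ρ := root_gt_one' hρ3
  have huniq : ∀ s : ℝ, s^3 - s^2 - 1 = 0 → s = ρ := by
    intro s hs
    have h1s := root_gt_one' hs
    have hkey : (s - ρ) * (s^2 + s*ρ + ρ^2 - s - ρ) = 0 := by
      linear_combination hs - hρ3
    have hQ : 0 < s^2 + s*ρ + ρ^2 - s - ρ := by
      nlinarith [mul_pos (show (0:ℝ) < s by linarith) (show (0:ℝ) < s - 1 by linarith),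
        mul_pos (show (0:ℝ) < ρ by linarith) (show (0:ℝ) < ρ - 1 by linarith),
        mul_pos (show (0:ℝ) < s by linarith) (show (0:ℝ) < ρ by linarith)]
    rcases mul_eq_zero.1 hkey with h | h
    · linarith [sub_eq_zero.1 h]
    · linarith
  refine ⟨ρ, hρ3, huniq, hρdef, ?_⟩
  rw [Metric.tendsto_atTop]
  intro ε hε
  obtain ⟨ε', hε'def⟩ : ∃ e : ℝ, e = min ε ((ρ-1)/2) := ⟨_, rfl⟩
  have hε'ε : ε' ≤ ε := by rw [hε'def]; exact min_le_left _ _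
  have hε'ρ : ε' ≤ (ρ-1)/2 := by rw [hε'def]; exact min_le_right _ _
  have hε'0 : 0 < ε' := by rw [hε'def]; exact lt_min hε (by linarith)
  obtain ⟨y, hydef⟩ : ∃ y : ℝ, y = ρ - ε'/2 := ⟨_, rfl⟩
  have hy1 : 1 < y := by rw [hydef]; linarith
  have hyρ : y < ρ := by rw [hydef]; linarith
  obtain ⟨d, hddef⟩ : ∃ d : ℝ, d = y^2 + 1 - y^3 := ⟨_, rfl⟩
  have hd : 0 < d := by
    have := cube_strict' hy1.le hyρ
    rw [hddef]; linarith
  obtain ⟨c, hcdef⟩ : ∃ c : ℝ, c = (ρ+ε')^3 - (ρ+ε')^2 - 1 := ⟨_, rfl⟩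
  have hc : 0 < c := by
    have := cube_strict' hρ1.le (show ρ < ρ + ε' by linarith)
    rw [hcdef]; linarith
  obtain ⟨N₁, hN₁⟩ := eventually_atTop.1
    ((tendsto_pow_atTop_atTop_of_one_lt
      (show (1:ℝ) < ρ + ε' by linarith)).eventually_ge_atTop (3/c + 1))
  obtain ⟨N₂, hN₂⟩ := eventually_atTop.1
    ((tendsto_pow_atTop_atTop_of_one_lt hy1).eventually_ge_atTop ((y^3+y)/d + 1))
  refine ⟨N₁ + N₂ + 6, fun n hn => ?_⟩
  have hn4 : 4 ≤ n := by omega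
  obtain ⟨⟨z, hzroot, hzabs⟩, hmax⟩ := hrho n hn4
  -- Upper bound : rho n < ρ + ε'
  have hupper : rho n < ρ + ε' := by
    by_contra hcon
    push_neg at hcon
    have hs : ρ + ε' ≤ ‖z‖ := by rw [hzabs]; exact hcon
    have hs1 : (1:ℝ) ≤ ‖z‖ := by linarith
    have hz0 : z^(n+4)+z^(n+3)-z^(n+1)-2*(∑ i ∈ Finset.Icc 4 n, z^i)-z^3+z+1 = 0 := by
      have := hzroot
      rw [Polynomial.IsRoot, hr n hn4, eval_r'] at this
      exact this
    have hfac : (z+1)*(z^(n+1)*(z^3-z^2-1)+(z^3+z-1)) = 0 := by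
      rw [← key_id' n hn4 z, hz0, mul_zero]
    have hzne : z + 1 ≠ 0 := by
      intro h
      have hz : z = -1 := by linear_combination h
      rw [hz] at hs
      simp at hs
      linarith
    have hfg : z^(n+1)*(z^3-z^2-1) = -(z^3+z-1) := by
      rcases mul_eq_zero.1 hfac with h | h
      · exact absurd h hzne
      · linear_combination h
    have habs : (‖z‖)^(n+1) * ‖(z^3-z^2-1)‖
        = ‖(z^3+z-1)‖ := by
      have := congrArg norm hfg
      rwa [norm_mul, norm_pow, norm_neg] at this
    have hFz : c ≤ ‖(z^3-z^2-1)‖ := by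
      have h1 : ‖(z^3)‖ ≤ ‖(z^3-z^2-1)‖ + ‖(z^2+1)‖ := by
        calc ‖(z^3)‖ = ‖((z^3-z^2-1) + (z^2+1))‖ := by
              exact congrArg norm (by ring)
        _ ≤ _ := norm_add_le _ _
      have h2 : ‖(z^2+1)‖ ≤ (‖z‖)^2 + 1 := by
        calc ‖(z^2+1)‖ ≤ ‖(z^2)‖ + ‖1‖ :=
              norm_add_le _ _
        _ = (‖z‖)^2 + 1 := by rw [norm_pow, norm_one]
      have h3 : ‖(z^3)‖ = (‖z‖)^3 := norm_pow _ _
      have h5 := cube_mono' (show (1:ℝ) ≤ ρ + ε' by linarith) hs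
      rw [hcdef]
      rw [h3] at h1
      linarith
    have hGz : ‖(z^3+z-1)‖ ≤ (‖z‖)^3 + ‖z‖ + 1 := by
      calc ‖(z^3+z-1)‖ = ‖(z^3 + (z + (-1)))‖ :=
            congrArg norm (by ring)
      _ ≤ ‖(z^3)‖ + ‖(z + (-1))‖ := norm_add_le _ _
      _ ≤ ‖(z^3)‖ + (‖z‖ + ‖(-1 : ℂ)‖) := by
          linarith [norm_add_le z (-1)]
      _ = (‖z‖)^3 + ‖z‖ + 1 := by
          rw [norm_pow]
          simp [add_assoc]
    have hsplit : (‖z‖)^(n+1) = (‖z‖)^3 * (‖z‖)^(n-2) := by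
      rw [← pow_add]; congr 1; omega
    have hsn2 : 3/c + 1 ≤ (‖z‖)^(n-2) := by
      calc 3/c + 1 ≤ (ρ+ε')^(n-2) := hN₁ (n-2) (by omega)
      _ ≤ (‖z‖)^(n-2) := pow_le_pow_left₀ (by linarith) hs _
    have hs3 : (0:ℝ) < (‖z‖)^3 := by positivity
    have h2 : (‖z‖)^3 * ((3/c+1) * c)
        ≤ (‖z‖)^3 * ((‖z‖)^(n-2) * ‖(z^3-z^2-1)‖) := by
      apply mul_le_mul_of_nonneg_left _ hs3.le
      exact mul_le_mul hsn2 hFz hc.le (le_trans (by positivity) hsn2)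
    have h3 : (3/c+1)*c = 3 + c := by field_simp
    rw [h3] at h2
    rw [hsplit, mul_assoc] at habs
    exact final_contra' hc hs1 (le_trans h2 (le_of_eq habs)) hGz
  -- Lower bound : ρ - ε' < rho n
  have hlower : ρ - ε' < rho n := by
    set F : ℝ → ℝ := fun x => x^(n+1)*(x^3-x^2-1)+(x^3+x-1) with hFdef
    have hcont : ContinuousOn F (Set.Icc y ρ) := by fun_prop
    have hFy : F y < 0 := by
      have hyn : (y^3+y)/d + 1 ≤ y^n := hN₂ n (by omega)
      have hyn1 : y^n ≤ y^(n+1) := pow_le_pow_right₀ hy1.le (by omega)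
      have h1 : ((y^3+y)/d + 1) * d ≤ y^(n+1) * d :=
        mul_le_mul_of_nonneg_right (le_trans hyn hyn1) hd.le
      have heq : ((y^3+y)/d+1)*d = y^3+y+d := by field_simp
      rw [heq, hddef] at h1
      simp only [hFdef]
      nlinarith [h1, hd, hddef]
    have hFρ : 0 < F ρ := by
      simp only [hFdef]
      rw [hρ3, mul_zero, zero_add]
      nlinarith [hρ1]
    have hmem : (0:ℝ) ∈ Set.Icc (F y) (F ρ) := ⟨hFy.le, hFρ.le⟩
    obtain ⟨x₀, hx₀mem, hx₀⟩ := intermediate_value_Icc hyρ.le hcont hmem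
    have hx₀y : y ≤ x₀ := hx₀mem.1
    have hx₀1 : 1 < x₀ := lt_of_lt_of_le hy1 hx₀y
    have hC : ((x₀:ℂ))^(n+1)*((x₀:ℂ)^3-(x₀:ℂ)^2-1)+((x₀:ℂ)^3+(x₀:ℂ)-1) = 0 := by
      simp only [hFdef] at hx₀
      exact_mod_cast congrArg (fun t : ℝ => (t:ℂ)) hx₀
    have hkey := key_id' n hn4 (x₀:ℂ)
    rw [hC, mul_zero] at hkey
    have hne : ((x₀:ℂ) - 1) ≠ 0 := by
      intro h
      have h1 : (x₀:ℂ) = 1 := by linear_combination h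
      have h2 : x₀ = 1 := by exact_mod_cast h1
      linarith
    have hE : (x₀:ℂ)^(n+4)+(x₀:ℂ)^(n+3)-(x₀:ℂ)^(n+1)
        -2*(∑ i ∈ Finset.Icc 4 n, (x₀:ℂ)^i)-(x₀:ℂ)^3+(x₀:ℂ)+1 = 0 := by
      rcases mul_eq_zero.1 hkey with h | h
      · exact absurd h hne
      · exact h
    have hroot : (r n).IsRoot (x₀:ℂ) := by
      rw [Polynomial.IsRoot, hr n hn4, eval_r']
      exact hE
    have hle := hmax _ hroot
    rw [Complex.norm_real, Real.norm_eq_abs, abs_of_pos (by linarith)] at hle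
    linarith
  rw [Real.dist_eq, abs_lt]
  constructor <;> linarith
end

section
/- Let B := [[0, −2D],[−2F, 0]] (the (m+k)×(m+k) block matrix 2I − K, where K = [[2I, 2D],[2F, 2I]] is the Cartan matrix). Then the following identity of polynomials in the variable t holds: det((1 + t²)·I − t·B) = det(t²·I − C). In particular, the generating-function matrix M(t) = (1+t²)I − tB of the McKay–Slodowy operator has determinant equal to the characteristic polynomial of the affine Coxeter transformation C evaluated at t². -/
open Matrix Polynomial

/-- Let `B = [[0, −2D],[−2F, 0]] = 2I − K` (with `K` the Cartan matrix)
and let `C` be the (affine) Coxeter transformation. Then, as polynomials in `t`,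
`det((1 + t²)·I − t·B) = det(t²·I − C)`: the determinant of the generating-function
matrix `M(t)` of the McKay–Slodowy operator equals the characteristic polynomial of the
affine Coxeter transformation evaluated at `t²`. -/
theorem stmt_18 (m k : ℕ) (hm : 0 < m) (hk : 0 < k)
    (D : Matrix (Fin m) (Fin k) ℝ) (F : Matrix (Fin k) (Fin m) ℝ)
    (C : Matrix (Fin m ⊕ Fin k) (Fin m ⊕ Fin k) ℝ)
    (hC : C = fromBlocks (-1) ((-2 : ℝ) • D) 0 1 * fromBlocks 1 0 ((-2 : ℝ) • F) (-1))
    (B : Matrix (Fin m ⊕ Fin k) (Fin m ⊕ Fin k) ℝ)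
    (hB : B = fromBlocks 0 ((-2 : ℝ) • D) ((-2 : ℝ) • F) 0) :
    Matrix.det
        (((1 + Polynomial.X ^ 2 : Polynomial ℝ)) • (1 : Matrix (Fin m ⊕ Fin k) (Fin m ⊕ Fin k) (Polynomial ℝ))
          - (Polynomial.X : Polynomial ℝ) • B.map (fun a => Polynomial.C a))
      = Matrix.det
        (((Polynomial.X ^ 2 : Polynomial ℝ)) • (1 : Matrix (Fin m ⊕ Fin k) (Fin m ⊕ Fin k) (Polynomial ℝ))
          - C.map (fun a => Polynomial.C a)) := by
  subst hB hC
  have hfun : (fun a : ℝ => Polynomial.C a) = ⇑(Polynomial.C : ℝ →+* ℝ[X]) := rfl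
  set d : Matrix (Fin m) (Fin k) ℝ[X] := D.map (fun a => Polynomial.C a) with hd
  set f : Matrix (Fin k) (Fin m) ℝ[X] := F.map (fun a => Polynomial.C a) with hf
  set p : ℝ[X] := 1 + X ^ 2 with hp
  have hone : (1 : Matrix (Fin m ⊕ Fin k) (Fin m ⊕ Fin k) ℝ[X])
      = fromBlocks 1 0 0 1 := (fromBlocks_one).symm
  -- mapped blocks
  have h1m : ((1 : Matrix (Fin m) (Fin m) ℝ)).map ⇑(Polynomial.C : ℝ →+* ℝ[X]) = 1 :=
    Matrix.map_one _ (map_zero _) (map_one _)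
  have h1k : ((1 : Matrix (Fin k) (Fin k) ℝ)).map ⇑(Polynomial.C : ℝ →+* ℝ[X]) = 1 :=
    Matrix.map_one _ (map_zero _) (map_one _)
  have hm1m : ((-1 : Matrix (Fin m) (Fin m) ℝ)).map ⇑(Polynomial.C : ℝ →+* ℝ[X]) = -1 := by
    ext i j; simp [Matrix.map_apply, Matrix.one_apply, apply_ite]
  have hm1k : ((-1 : Matrix (Fin k) (Fin k) ℝ)).map ⇑(Polynomial.C : ℝ →+* ℝ[X]) = -1 := by
    ext i j; simp [Matrix.map_apply, Matrix.one_apply, apply_ite]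
  have h0 : ((0 : Matrix (Fin k) (Fin m) ℝ)).map ⇑(Polynomial.C : ℝ →+* ℝ[X]) = 0 := by
    ext i j; simp [Matrix.map_apply]
  have h0' : ((0 : Matrix (Fin m) (Fin k) ℝ)).map ⇑(Polynomial.C : ℝ →+* ℝ[X]) = 0 := by
    ext i j; simp [Matrix.map_apply]
  have hDm : (((-2 : ℝ) • D)).map ⇑(Polynomial.C : ℝ →+* ℝ[X]) = (-2 : ℝ[X]) • d := by
    refine Matrix.ext fun i j => ?_
    simp [Matrix.map_apply, hd, smul_eq_mul, _root_.map_neg, _root_.map_mul, _root_.map_ofNat]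
  have hFm : (((-2 : ℝ) • F)).map ⇑(Polynomial.C : ℝ →+* ℝ[X]) = (-2 : ℝ[X]) • f := by
    refine Matrix.ext fun i j => ?_
    simp [Matrix.map_apply, hf, smul_eq_mul, _root_.map_neg, _root_.map_mul, _root_.map_ofNat]
  -- the key matrices
  set M : Matrix (Fin m ⊕ Fin k) (Fin m ⊕ Fin k) ℝ[X] :=
      fromBlocks (p • 1) (((2 : ℝ[X]) * X) • d) (((2 : ℝ[X]) * X) • f) (p • 1) with hMdef
  set N : Matrix (Fin m ⊕ Fin k) (Fin m ⊕ Fin k) ℝ[X] :=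
      fromBlocks (p • 1) (((2 : ℝ[X]) * X ^ 2) • d) ((2 : ℝ[X]) • f) (p • 1) with hNdef
  set T : Matrix (Fin m ⊕ Fin k) (Fin m ⊕ Fin k) ℝ[X] :=
      fromBlocks 1 ((-2 : ℝ[X]) • d) 0 1 with hTdef
  set S : Matrix (Fin m ⊕ Fin k) (Fin m ⊕ Fin k) ℝ[X] :=
      fromBlocks 1 0 0 ((X : ℝ[X]) • 1) with hSdef
  -- LHS matrix equals M
  have hM : (p • (1 : Matrix (Fin m ⊕ Fin k) (Fin m ⊕ Fin k) ℝ[X])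
        - (X : ℝ[X]) • (fromBlocks 0 ((-2 : ℝ) • D) ((-2 : ℝ) • F) 0).map (fun a => Polynomial.C a))
      = M := by
    rw [hMdef]
    refine Matrix.ext fun i j => ?_
    rcases i with i|i <;> rcases j with j|j <;>
      simp [Matrix.sub_apply, Matrix.smul_apply, Matrix.map_apply, Matrix.one_apply, hd, hf,
        smul_eq_mul, _root_.map_neg, _root_.map_mul, Polynomial.C_eq_natCast, _root_.map_ofNat] <;>
      (try split_ifs) <;> ring
  -- RHS matrix equals T * N
  have hTN : ((X ^ 2 : ℝ[X]) • (1 : Matrix (Fin m ⊕ Fin k) (Fin m ⊕ Fin k) ℝ[X])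
        - (fromBlocks (-1) ((-2 : ℝ) • D) 0 1 * fromBlocks 1 0 ((-2 : ℝ) • F) (-1)).map
            (fun a => Polynomial.C a))
      = T * N := by
    rw [hfun, Matrix.map_mul, fromBlocks_map, fromBlocks_map, hm1m, hm1k, h1m, h1k, h0, hDm, hFm,
      hTdef, hNdef, fromBlocks_multiply, fromBlocks_multiply, hone, fromBlocks_smul,
      sub_eq_add_neg, fromBlocks_neg, fromBlocks_add, fromBlocks_inj]
    refine ⟨?_, ?_, ?_, ?_⟩ <;>
      simp only [Matrix.neg_mul, Matrix.mul_neg, Matrix.one_mul, Matrix.mul_one, Matrix.zero_mul,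
        Matrix.mul_zero, Matrix.smul_mul, Matrix.mul_smul, smul_smul, smul_zero, zero_add, add_zero,
        neg_neg, hp, smul_neg, h0, h0', neg_zero]
    all_goals first
      | module
      | (rw [add_smul, one_smul, add_comm])
  -- M * S = S * N
  have hMS : M * S = S * N := by
    rw [hMdef, hNdef, hSdef, fromBlocks_multiply, fromBlocks_multiply, fromBlocks_inj]
    refine ⟨?_, ?_, ?_, ?_⟩ <;>
      simp only [Matrix.one_mul, Matrix.mul_one, Matrix.zero_mul, Matrix.mul_zero,
        Matrix.smul_mul, Matrix.mul_smul, smul_smul, smul_zero, zero_add, add_zero,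
        Matrix.one_mul]
    all_goals first
      | module
      | (rw [add_smul, one_smul, add_comm])
  -- determinants
  have hdetT : T.det = 1 := by rw [hTdef, det_fromBlocks_zero₂₁]; simp
  have hdetS : S.det = X ^ k := by
    rw [hSdef, det_fromBlocks_zero₂₁, det_one, one_mul, det_smul, det_one, mul_one]
    simp
  have hMN : M.det = N.det := by
    have h := congrArg Matrix.det hMS
    rw [det_mul, det_mul, hdetS, mul_comm] at h
    exact mul_left_cancel₀ (pow_ne_zero k Polynomial.X_ne_zero) h
  rw [hM, hTN, det_mul, hdetT, one_mul, hMN]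
end

section
/- Let K(D₄) be the 4×4 Cartan matrix of the Dynkin diagram D₄ (central vertex 0 adjacent to vertices 1, 2, 3), K(D̃₄) the 5×5 Cartan matrix of the extended Dynkin diagram D̃₄ (central vertex 0 adjacent to vertices 1, 2, 3, 4), K(G₂) := [[2, −1],[−3, 2]], and K(G̃₂) := [[2, −1, 0],[−1, 2, −1],[0, −3, 2]], and let 𝒳(Γ) denote the characteristic polynomial of the Coxeter transformation C(K(Γ)). Then 𝒳(D₄)·(X² − 1)² = (X³ + 1)·𝒳(D̃₄) and 𝒳(G₂)·(X² − 1)² = (X³ + 1)·𝒳(G̃₂); consequently 𝒳(D₄)·𝒳(G̃₂) = 𝒳(G₂)·𝒳(D̃₄), i.e., the ratio 𝒳(Γ)/𝒳(Γ̃) is the same for the diagram D₄ and for its folded diagram G₂. -/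
open Matrix Polynomial

/-- The `i`-th simple reflection matrix of a generalized Cartan matrix `K`:
the identity matrix with its `i`-th row replaced by the row `j ↦ δ_{ij} − K_{ij}`. -/
def simpleRefl {n : ℕ} (K : Matrix (Fin n) (Fin n) ℤ) (i : Fin n) :
    Matrix (Fin n) (Fin n) ℤ :=
  fun a b => if a = i then (if i = b then 1 else 0) - K i b else (if a = b then 1 else 0)

/-- The Coxeter transformation `C(K) = R₁·R₂·⋯·R_n` of a generalized Cartan matrix `K`,
the product of the simple reflections in increasing index order. -/
def coxeterOf {n : ℕ} (K : Matrix (Fin n) (Fin n) ℤ) : Matrix (Fin n) (Fin n) ℤ :=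
  (List.ofFn fun i => simpleRefl K i).prod

/-- The characteristic polynomial `𝒳(Γ) = det(X·I − C(K))` of the Coxeter
transformation of a generalized Cartan matrix `K`. -/
noncomputable def chi {n : ℕ} (K : Matrix (Fin n) (Fin n) ℤ) : Polynomial ℤ :=
  (coxeterOf K).charpoly

set_option maxHeartbeats 2000000 in
lemma chi_D4 : chi !![2,-1,-1,-1; -1,2,0,0; -1,0,2,0; -1,0,0,2]
    = X^4 + X^3 + X + 1 := by
  have hC : coxeterOf !![2,-1,-1,-1; -1,2,0,0; -1,0,2,0; -1,0,0,2]
      = !![2,-1,-1,-1; 1,-1,0,0; 1,0,-1,0; 1,0,0,-1] := by decide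
  have h : charmatrix !![(2:ℤ),-1,-1,-1; 1,-1,0,0; 1,0,-1,0; 1,0,0,-1]
      = !![X-2,1,1,1; -1,X+1,0,0; -1,0,X+1,0; -1,0,0,X+1] := by
    ext i j : 2
    fin_cases i <;> fin_cases j <;>
      simp [charmatrix_apply_eq, charmatrix_apply_ne, Matrix.vecHead, Matrix.vecTail]
  rw [chi, hC, Matrix.charpoly, h]
  simp [Matrix.det_succ_row_zero, Fin.sum_univ_succ, Fin.succAbove]
  ring

set_option maxHeartbeats 2000000 in
lemma chi_D4e : chi !![2,-1,-1,-1,-1; -1,2,0,0,0; -1,0,2,0,0; -1,0,0,2,0; -1,0,0,0,2]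
    = X^5 + X^4 - 2*X^3 - 2*X^2 + X + 1 := by
  have hC : coxeterOf !![2,-1,-1,-1,-1; -1,2,0,0,0; -1,0,2,0,0; -1,0,0,2,0; -1,0,0,0,2]
      = !![3,-1,-1,-1,-1; 1,-1,0,0,0; 1,0,-1,0,0; 1,0,0,-1,0; 1,0,0,0,-1] := by decide
  have h : charmatrix !![(3:ℤ),-1,-1,-1,-1; 1,-1,0,0,0; 1,0,-1,0,0; 1,0,0,-1,0; 1,0,0,0,-1]
      = !![X-3,1,1,1,1; -1,X+1,0,0,0; -1,0,X+1,0,0; -1,0,0,X+1,0; -1,0,0,0,X+1] := by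
    ext i j : 2
    fin_cases i <;> fin_cases j <;>
      simp [charmatrix_apply_eq, charmatrix_apply_ne, Matrix.vecHead, Matrix.vecTail]
  rw [chi, hC, Matrix.charpoly, h]
  simp [Matrix.det_succ_row_zero, Fin.sum_univ_succ, Fin.succAbove]
  ring

set_option maxHeartbeats 2000000 in
lemma chi_G2 : chi !![2,-1; -3,2] = X^2 - X + 1 := by
  have hC : coxeterOf !![2,-1; -3,2] = !![2,-1; 3,-1] := by decide
  have h : charmatrix !![(2:ℤ),-1; 3,-1] = !![X-2,1; -3,X+1] := by
    ext i j : 2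
    fin_cases i <;> fin_cases j <;>
      simp [charmatrix_apply_eq, charmatrix_apply_ne, Matrix.vecHead, Matrix.vecTail]
  rw [chi, hC, Matrix.charpoly, h]
  simp [Matrix.det_fin_two]
  ring

set_option maxHeartbeats 2000000 in
lemma chi_G2e : chi !![2,-1,0; -1,2,-1; 0,-3,2] = X^3 - X^2 - X + 1 := by
  have hC : coxeterOf !![2,-1,0; -1,2,-1; 0,-3,2] = !![0,2,-1; 1,2,-1; 0,3,-1] := by decide
  have h : charmatrix !![(0:ℤ),2,-1; 1,2,-1; 0,3,-1]
      = !![X,-2,1; -1,X-2,1; 0,-3,X+1] := by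
    ext i j : 2
    fin_cases i <;> fin_cases j <;>
      simp [charmatrix_apply_eq, charmatrix_apply_ne, Matrix.vecHead, Matrix.vecTail]
  rw [chi, hC, Matrix.charpoly, h]
  simp [Matrix.det_fin_three]
  ring

/-- With `𝒳` the characteristic polynomial of the Coxeter transformation,
for the Cartan matrices of `D₄`, `D̃₄`, `G₂` and `G̃₂` one has
`𝒳(D₄)·(X² − 1)² = (X³ + 1)·𝒳(D̃₄)` and `𝒳(G₂)·(X² − 1)² = (X³ + 1)·𝒳(G̃₂)`;
consequently `𝒳(D₄)·𝒳(G̃₂) = 𝒳(G₂)·𝒳(D̃₄)`: the ratio `𝒳(Γ)/𝒳(Γ̃)` is the same for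
`D₄` and its folded diagram `G₂`. -/
theorem stmt_19
    (KD4 : Matrix (Fin 4) (Fin 4) ℤ)
    (hKD4 : KD4 = !![2,-1,-1,-1; -1,2,0,0; -1,0,2,0; -1,0,0,2])
    (KD4e : Matrix (Fin 5) (Fin 5) ℤ)
    (hKD4e : KD4e = !![2,-1,-1,-1,-1; -1,2,0,0,0; -1,0,2,0,0; -1,0,0,2,0; -1,0,0,0,2])
    (KG2 : Matrix (Fin 2) (Fin 2) ℤ)
    (hKG2 : KG2 = !![2,-1; -3,2])
    (KG2e : Matrix (Fin 3) (Fin 3) ℤ)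
    (hKG2e : KG2e = !![2,-1,0; -1,2,-1; 0,-3,2]) :
    chi KD4 * (X ^ 2 - 1) ^ 2 = (X ^ 3 + 1) * chi KD4e ∧
    chi KG2 * (X ^ 2 - 1) ^ 2 = (X ^ 3 + 1) * chi KG2e ∧
    chi KD4 * chi KG2e = chi KG2 * chi KD4e := by
  subst hKD4 hKD4e hKG2 hKG2e
  rw [chi_D4, chi_D4e, chi_G2, chi_G2e]
  refine ⟨by ring, by ring, by ring⟩
end
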